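/- arXiv:2602.06658 — 2 statements merged into one kernel-verified Lean document; each statement's English description precedes it below -/
import Mathlib

section
/- Let α be a compactly supported centered Borel probability measure on ℝ^D, β a compactly supported centered Borel probability measure on ℝ^E, and ε > 0. Fix π_t ∈ Π(α,β), set Γ_t = ∫ x yᵀ dπ_t(x,y) ∈ ℝ^{D×E}, and define G_{π_t}(x,y) = 2·∫ (‖x−x'‖² − ‖y−y'‖²)² dπ_t(x',y'). Then there exists a constant k ∈ ℝ (independent of π) such that for every π ∈ Π(α,β): ∫ G_{π_t} dπ + ε·KL(π‖α⊗β) = ( ∫ c_{Γ_t} dπ + ε·KL(π‖α⊗β) ) + k. In particular, a coupling π minimizes the entropic objective π ↦ ∫ c_{Γ_t} dπ + ε·KL(π‖α⊗β) over Π(α,β) if and only if it minimizes the mirror-descent objective π ↦ ∫ G_{π_t} dπ + ε·KL(π‖α⊗β) over Π(α,β). -/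
open MeasureTheory Classical

/-- Kullback–Leibler divergence, with value `⊤` when `π` is not absolutely continuous
with respect to `μ` or the log-likelihood ratio is not integrable. -/
noncomputable def klE {Z : Type*} [MeasurableSpace Z] (π μ : Measure Z) : EReal :=
  if π ≪ μ ∧ Integrable (llr π μ) π then ((∫ z, llr π μ z ∂π : ℝ) : EReal) else ⊤

/-- The set of couplings between `α` and `β`. -/
def couplings {X Y : Type*} [MeasurableSpace X] [MeasurableSpace Y]
    (α : Measure X) (β : Measure Y) : Set (Measure (X × Y)) :=
  {π | π.map Prod.fst = α ∧ π.map Prod.snd = β}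

section MDEHelpers

open Finset

variable {D E : ℕ}
local notation "X" => EuclideanSpace ℝ (Fin D)
local notation "Y" => EuclideanSpace ℝ (Fin E)


lemma mde_dbl {ι κ : Type*} [Fintype ι] [Fintype κ] (c : ℝ) (fx : ι → ℝ) (fy : κ → ℝ)
    (gx : ι → ℝ) (gy : κ → ℝ) :
    ∑ i, ∑ j, (c*(fx i*fy j))*(gx i*gy j) = c * ((∑ i, fx i * gx i) * (∑ j, fy j * gy j)) := by
  rw [Finset.sum_mul_sum, Finset.mul_sum]
  exact Finset.sum_congr rfl fun i _ => by
    rw [Finset.mul_sum]; exact Finset.sum_congr rfl fun j _ => by ring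

lemma mde_sgl {ι : Type*} [Fintype ι] (c a : ℝ) (fx gx : ι → ℝ) :
    ∑ i, (c * fx i) * (a * gx i) = (c * a) * (∑ i, fx i * gx i) := by
  rw [Finset.mul_sum]; exact Finset.sum_congr rfl fun i _ => by ring

lemma mde_sgl1 {ι : Type*} [Fintype ι] (c : ℝ) (fx gx : ι → ℝ) :
    ∑ i, (c * fx i) * gx i = c * (∑ i, fx i * gx i) := by
  rw [Finset.mul_sum]; exact Finset.sum_congr rfl fun i _ => by ring

lemma mde_swap2 {ι κ : Type*} [Fintype ι] [Fintype κ] (c : ℝ) (w g : ι → κ → ℝ) :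
    ∑ i, ∑ j, (c * w i j) * (g i j) = c * ∑ i, ∑ j, g i j * w i j := by
  rw [Finset.mul_sum]
  exact Finset.sum_congr rfl fun i _ => by
    rw [Finset.mul_sum]; exact Finset.sum_congr rfl fun j _ => by ring

lemma mde_swap1 {ι : Type*} [Fintype ι] (c : ℝ) (w g : ι → ℝ) :
    ∑ i, (c * w i) * (g i) = c * ∑ i, g i * w i := by
  rw [Finset.mul_sum]; exact Finset.sum_congr rfl fun i _ => by ring

lemma mde_key (πt : Measure (X × Y)) [IsProbabilityMeasure πt]
    (hint : ∀ f : X × Y → ℝ, Continuous f → Integrable f πt)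
    (hm1 : ∀ i, ∫ q, q.1 i ∂πt = 0) (hm2 : ∀ j, ∫ q, q.2 j ∂πt = 0)
    (x : X) (y : Y) :
    2 * ∫ q, (‖x - q.1‖^2 - ‖y - q.2‖^2)^2 ∂πt
      = (-16 * ∑ i, ∑ j, (∫ q, q.1 i * q.2 j ∂πt) * (x i * y j) - 4*‖x‖^2*‖y‖^2)
        + (2*‖x‖^4 + 2*(∫ q, (‖q.1‖^2-‖q.2‖^2)^2 ∂πt)
           + 8*∑ i, ∑ j, (∫ q, q.1 i * q.1 j ∂πt)*(x i * x j)
           - 8*∑ i, (∫ q, (‖q.1‖^2-‖q.2‖^2) * q.1 i ∂πt)*(x i)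
           + 4*(∫ q, (‖q.1‖^2-‖q.2‖^2) ∂πt)*‖x‖^2)
        + (2*‖y‖^4 + 8*∑ i, ∑ j, (∫ q, q.2 i * q.2 j ∂πt)*(y i * y j)
           + 8*∑ j, (∫ q, (‖q.1‖^2-‖q.2‖^2) * q.2 j ∂πt)*(y j)
           - 4*(∫ q, (‖q.1‖^2-‖q.2‖^2) ∂πt)*‖y‖^2) := by
  have hpt : ∀ q : X × Y,
      2*(‖x - q.1‖^2 - ‖y - q.2‖^2)^2 =
        (∑ i, ∑ j, (-16*(x i*y j))*(q.1 i*q.2 j))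
      + (∑ i, ∑ j, (8*(x i*x j))*(q.1 i*q.1 j))
      + (∑ i, ∑ j, (8*(y i*y j))*(q.2 i*q.2 j))
      + (∑ i, (-8*(x i))*((‖q.1‖^2-‖q.2‖^2) * q.1 i))
      + (∑ j, (8*(y j))*((‖q.1‖^2-‖q.2‖^2) * q.2 j))
      + (∑ i, ((-8*‖x‖^2+8*‖y‖^2) * x i) * q.1 i)
      + (∑ j, ((8*‖x‖^2-8*‖y‖^2) * y j) * q.2 j)
      + (4*‖x‖^2 - 4*‖y‖^2) * (‖q.1‖^2-‖q.2‖^2)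
      + 2 * (‖q.1‖^2-‖q.2‖^2)^2
      + (2*‖x‖^4 + 2*‖y‖^4 - 4*‖x‖^2*‖y‖^2) := by
    intro q
    have e1 : ‖x - q.1‖^2 = ‖x‖^2 - 2*(∑ i, x i * q.1 i) + ‖q.1‖^2 := by
      rw [norm_sub_sq_real]; simp [PiLp.inner_apply, RCLike.inner_apply, conj_trivial]
      exact Finset.sum_congr rfl fun i _ => mul_comm _ _
    have e2 : ‖y - q.2‖^2 = ‖y‖^2 - 2*(∑ j, y j * q.2 j) + ‖q.2‖^2 := by
      rw [norm_sub_sq_real]; simp [PiLp.inner_apply, RCLike.inner_apply, conj_trivial]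
      exact Finset.sum_congr rfl fun i _ => mul_comm _ _
    rw [e1, e2, mde_dbl, mde_dbl, mde_dbl, mde_sgl, mde_sgl, mde_sgl1, mde_sgl1]
    ring
  have i1 : Integrable (fun q : X × Y => ∑ i, ∑ j, (-16*(x i*y j))*(q.1 i*q.2 j)) πt :=
    hint _ (by fun_prop)
  have i2 : Integrable (fun q : X × Y => ∑ i, ∑ j, (8*(x i*x j))*(q.1 i*q.1 j)) πt :=
    hint _ (by fun_prop)
  have i3 : Integrable (fun q : X × Y => ∑ i, ∑ j, (8*(y i*y j))*(q.2 i*q.2 j)) πt :=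
    hint _ (by fun_prop)
  have i4 : Integrable (fun q : X × Y => ∑ i, (-8*(x i))*((‖q.1‖^2-‖q.2‖^2) * q.1 i)) πt :=
    hint _ (by fun_prop)
  have i5 : Integrable (fun q : X × Y => ∑ j, (8*(y j))*((‖q.1‖^2-‖q.2‖^2) * q.2 j)) πt :=
    hint _ (by fun_prop)
  have i6 : Integrable (fun q : X × Y => ∑ i, ((-8*‖x‖^2+8*‖y‖^2) * x i) * q.1 i) πt :=
    hint _ (by fun_prop)
  have i7 : Integrable (fun q : X × Y => ∑ j, ((8*‖x‖^2-8*‖y‖^2) * y j) * q.2 j) πt :=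
    hint _ (by fun_prop)
  have i8 : Integrable (fun q : X × Y => (4*‖x‖^2 - 4*‖y‖^2) * (‖q.1‖^2-‖q.2‖^2)) πt :=
    hint _ (by fun_prop)
  have i9 : Integrable (fun q : X × Y => 2 * (‖q.1‖^2-‖q.2‖^2)^2) πt :=
    hint _ (by fun_prop)
  have i10 : Integrable (fun _ : X × Y => (2*‖x‖^4 + 2*‖y‖^4 - 4*‖x‖^2*‖y‖^2)) πt :=
    integrable_const _
  rw [← integral_const_mul]
  rw [integral_congr_ae (Filter.Eventually.of_forall hpt)]
  have p2 : Integrable (fun q : X × Y => (∑ i, ∑ j, (-16*(x i*y j))*(q.1 i*q.2 j)) + (∑ i, ∑ j, (8*(x i*x j))*(q.1 i*q.1 j))) πt := 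
    i1.add i2
  have p3 : Integrable (fun q : X × Y => (∑ i, ∑ j, (-16*(x i*y j))*(q.1 i*q.2 j)) + (∑ i, ∑ j, (8*(x i*x j))*(q.1 i*q.1 j)) + (∑ i, ∑ j, (8*(y i*y j))*(q.2 i*q.2 j))) πt := 
    p2.add i3
  have p4 : Integrable (fun q : X × Y => (∑ i, ∑ j, (-16*(x i*y j))*(q.1 i*q.2 j)) + (∑ i, ∑ j, (8*(x i*x j))*(q.1 i*q.1 j)) + (∑ i, ∑ j, (8*(y i*y j))*(q.2 i*q.2 j)) + (∑ i, (-8*(x i))*((‖q.1‖^2-‖q.2‖^2) * q.1 i))) πt := 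
    p3.add i4
  have p5 : Integrable (fun q : X × Y => (∑ i, ∑ j, (-16*(x i*y j))*(q.1 i*q.2 j)) + (∑ i, ∑ j, (8*(x i*x j))*(q.1 i*q.1 j)) + (∑ i, ∑ j, (8*(y i*y j))*(q.2 i*q.2 j)) + (∑ i, (-8*(x i))*((‖q.1‖^2-‖q.2‖^2) * q.1 i)) + (∑ j, (8*(y j))*((‖q.1‖^2-‖q.2‖^2) * q.2 j))) πt := 
    p4.add i5
  have p6 : Integrable (fun q : X × Y => (∑ i, ∑ j, (-16*(x i*y j))*(q.1 i*q.2 j)) + (∑ i, ∑ j, (8*(x i*x j))*(q.1 i*q.1 j)) + (∑ i, ∑ j, (8*(y i*y j))*(q.2 i*q.2 j)) + (∑ i, (-8*(x i))*((‖q.1‖^2-‖q.2‖^2) * q.1 i)) + (∑ j, (8*(y j))*((‖q.1‖^2-‖q.2‖^2) * q.2 j)) + (∑ i, ((-8*‖x‖^2+8*‖y‖^2) * x i) * q.1 i)) πt := 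
    p5.add i6
  have p7 : Integrable (fun q : X × Y => (∑ i, ∑ j, (-16*(x i*y j))*(q.1 i*q.2 j)) + (∑ i, ∑ j, (8*(x i*x j))*(q.1 i*q.1 j)) + (∑ i, ∑ j, (8*(y i*y j))*(q.2 i*q.2 j)) + (∑ i, (-8*(x i))*((‖q.1‖^2-‖q.2‖^2) * q.1 i)) + (∑ j, (8*(y j))*((‖q.1‖^2-‖q.2‖^2) * q.2 j)) + (∑ i, ((-8*‖x‖^2+8*‖y‖^2) * x i) * q.1 i) + (∑ j, ((8*‖x‖^2-8*‖y‖^2) * y j) * q.2 j)) πt := 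
    p6.add i7
  have p8 : Integrable (fun q : X × Y => (∑ i, ∑ j, (-16*(x i*y j))*(q.1 i*q.2 j)) + (∑ i, ∑ j, (8*(x i*x j))*(q.1 i*q.1 j)) + (∑ i, ∑ j, (8*(y i*y j))*(q.2 i*q.2 j)) + (∑ i, (-8*(x i))*((‖q.1‖^2-‖q.2‖^2) * q.1 i)) + (∑ j, (8*(y j))*((‖q.1‖^2-‖q.2‖^2) * q.2 j)) + (∑ i, ((-8*‖x‖^2+8*‖y‖^2) * x i) * q.1 i) + (∑ j, ((8*‖x‖^2-8*‖y‖^2) * y j) * q.2 j) + ((4*‖x‖^2 - 4*‖y‖^2) * (‖q.1‖^2-‖q.2‖^2))) πt := 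
    p7.add i8
  have p9 : Integrable (fun q : X × Y => (∑ i, ∑ j, (-16*(x i*y j))*(q.1 i*q.2 j)) + (∑ i, ∑ j, (8*(x i*x j))*(q.1 i*q.1 j)) + (∑ i, ∑ j, (8*(y i*y j))*(q.2 i*q.2 j)) + (∑ i, (-8*(x i))*((‖q.1‖^2-‖q.2‖^2) * q.1 i)) + (∑ j, (8*(y j))*((‖q.1‖^2-‖q.2‖^2) * q.2 j)) + (∑ i, ((-8*‖x‖^2+8*‖y‖^2) * x i) * q.1 i) + (∑ j, ((8*‖x‖^2-8*‖y‖^2) * y j) * q.2 j) + ((4*‖x‖^2 - 4*‖y‖^2) * (‖q.1‖^2-‖q.2‖^2)) + (2 * (‖q.1‖^2-‖q.2‖^2)^2)) πt := 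
    p8.add i9
  rw [integral_add p9 i10, integral_add p8 i9, integral_add p7 i8, integral_add p6 i7,
      integral_add p5 i6, integral_add p4 i5, integral_add p3 i4, integral_add p2 i3,
      integral_add i1 i2]
  have e1 : ∫ q, ∑ i, ∑ j, (-16*(x i*y j))*(q.1 i*q.2 j) ∂πt
      = ∑ i, ∑ j, (-16*(x i*y j))*(∫ q, q.1 i*q.2 j ∂πt) := by
    rw [integral_finset_sum _ (fun i _ => hint _ (by fun_prop))]
    exact Finset.sum_congr rfl fun i _ => by
      rw [integral_finset_sum _ (fun j _ => hint _ (by fun_prop))]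
      exact Finset.sum_congr rfl fun j _ => integral_const_mul _ _
  have e2 : ∫ q, ∑ i, ∑ j, (8*(x i*x j))*(q.1 i*q.1 j) ∂πt
      = ∑ i, ∑ j, (8*(x i*x j))*(∫ q, q.1 i*q.1 j ∂πt) := by
    rw [integral_finset_sum _ (fun i _ => hint _ (by fun_prop))]
    exact Finset.sum_congr rfl fun i _ => by
      rw [integral_finset_sum _ (fun j _ => hint _ (by fun_prop))]
      exact Finset.sum_congr rfl fun j _ => integral_const_mul _ _
  have e3 : ∫ q, ∑ i, ∑ j, (8*(y i*y j))*(q.2 i*q.2 j) ∂πt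
      = ∑ i, ∑ j, (8*(y i*y j))*(∫ q, q.2 i*q.2 j ∂πt) := by
    rw [integral_finset_sum _ (fun i _ => hint _ (by fun_prop))]
    exact Finset.sum_congr rfl fun i _ => by
      rw [integral_finset_sum _ (fun j _ => hint _ (by fun_prop))]
      exact Finset.sum_congr rfl fun j _ => integral_const_mul _ _
  have e4 : ∫ q, ∑ i, (-8*(x i))*((‖q.1‖^2-‖q.2‖^2) * q.1 i) ∂πt
      = ∑ i, (-8*(x i))*(∫ q, (‖q.1‖^2-‖q.2‖^2) * q.1 i ∂πt) := by
    rw [integral_finset_sum _ (fun i _ => hint _ (by fun_prop))]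
    exact Finset.sum_congr rfl fun i _ => integral_const_mul _ _
  have e5 : ∫ q, ∑ j, (8*(y j))*((‖q.1‖^2-‖q.2‖^2) * q.2 j) ∂πt
      = ∑ j, (8*(y j))*(∫ q, (‖q.1‖^2-‖q.2‖^2) * q.2 j ∂πt) := by
    rw [integral_finset_sum _ (fun j _ => hint _ (by fun_prop))]
    exact Finset.sum_congr rfl fun j _ => integral_const_mul _ _
  have e6 : ∫ q, ∑ i, ((-8*‖x‖^2+8*‖y‖^2) * x i) * q.1 i ∂πt = 0 := by
    rw [integral_finset_sum _ (fun i _ => hint _ (by fun_prop))]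
    refine Finset.sum_eq_zero fun i _ => ?_
    rw [integral_const_mul, hm1 i, mul_zero]
  have e7 : ∫ q, ∑ j, ((8*‖x‖^2-8*‖y‖^2) * y j) * q.2 j ∂πt = 0 := by
    rw [integral_finset_sum _ (fun j _ => hint _ (by fun_prop))]
    refine Finset.sum_eq_zero fun j _ => ?_
    rw [integral_const_mul, hm2 j, mul_zero]
  have e8 : ∫ q, (4*‖x‖^2 - 4*‖y‖^2) * (‖q.1‖^2-‖q.2‖^2) ∂πt
      = (4*‖x‖^2 - 4*‖y‖^2) * ∫ q, (‖q.1‖^2-‖q.2‖^2) ∂πt := integral_const_mul _ _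
  have e9 : ∫ q, 2 * (‖q.1‖^2-‖q.2‖^2)^2 ∂πt
      = 2 * ∫ q, (‖q.1‖^2-‖q.2‖^2)^2 ∂πt := integral_const_mul _ _
  have e10 : ∫ _q, (2*‖x‖^4 + 2*‖y‖^4 - 4*‖x‖^2*‖y‖^2) ∂πt
      = (2*‖x‖^4 + 2*‖y‖^4 - 4*‖x‖^2*‖y‖^2) := by simp
  rw [e1, e2, e3, e4, e5, e6, e7, e8, e9, e10]
  rw [mde_swap2, mde_swap2, mde_swap2, mde_swap1 (-8 : ℝ) (fun i => x i), mde_swap1 (8 : ℝ) (fun j => y j)]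
  ring

end MDEHelpers

lemma mde_integ_cs {Z γ : Type*} [MeasurableSpace Z] [TopologicalSpace Z] [OpensMeasurableSpace Z]
    [NormedAddCommGroup γ] [SecondCountableTopology Z]
    (μ : Measure Z) [IsFiniteMeasure μ] {K : Set Z} (hK : IsCompact K) (hμ : μ Kᶜ = 0)
    {f : Z → γ} (hf : Continuous f) : Integrable f μ := by
  obtain ⟨C, hC⟩ := hK.exists_bound_of_continuousOn hf.continuousOn
  refine Integrable.mono' (integrable_const C) hf.aestronglyMeasurable ?_
  have : ∀ᵐ z ∂μ, z ∈ K := by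
    rw [MeasureTheory.ae_iff]; exact hμ
  filter_upwards [this] with z hz using hC z hz

lemma mde_prob {Z W : Type*} [MeasurableSpace Z] [MeasurableSpace W] (π : Measure (Z × W))
    (α : Measure Z) [IsProbabilityMeasure α] (h : π.map Prod.fst = α) :
    IsProbabilityMeasure π := by
  constructor
  have := h ▸ (Measure.map_apply measurable_fst MeasurableSet.univ)
  simpa using this.symm.trans (measure_univ)

lemma mde_supp {Z W : Type*} [MeasurableSpace Z] [TopologicalSpace Z] [OpensMeasurableSpace Z]
    [MeasurableSpace W] [TopologicalSpace W] [OpensMeasurableSpace W]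
    (π : Measure (Z × W)) (α : Measure Z) (β : Measure W)
    (KX : Set Z) (KY : Set W) (hKX : IsClosed KX) (hKY : IsClosed KY)
    (hα : α KXᶜ = 0) (hβ : β KYᶜ = 0)
    (h1 : π.map Prod.fst = α) (h2 : π.map Prod.snd = β) : π (KX ×ˢ KY)ᶜ = 0 := by
  have hsub : (KX ×ˢ KY)ᶜ ⊆ (Prod.fst ⁻¹' KXᶜ) ∪ (Prod.snd ⁻¹' KYᶜ) := by
    intro p hp
    simp only [Set.mem_compl_iff, Set.mem_prod, not_and_or] at hp
    simpa using hp
  have e1 : π (Prod.fst ⁻¹' KXᶜ) = 0 := by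
    rw [← Measure.map_apply measurable_fst hKX.measurableSet.compl, h1]; exact hα
  have e2 : π (Prod.snd ⁻¹' KYᶜ) = 0 := by
    rw [← Measure.map_apply measurable_snd hKY.measurableSet.compl, h2]; exact hβ
  exact le_antisymm (le_trans (measure_mono hsub) (by rw [measure_union_null e1 e2])) (zero_le)

/-- the KL-regularized linearization of the GW objective around a coupling
`π_t` coincides, up to an additive constant, with the entropic OT objective for the cost
`c_{Γ_t}`; in particular both have the same minimizers over couplings. -/
theorem mirror_descent_equivalence {D E : ℕ}
    (α : Measure (EuclideanSpace ℝ (Fin D))) (β : Measure (EuclideanSpace ℝ (Fin E)))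
    [IsProbabilityMeasure α] [IsProbabilityMeasure β]
    (KX : Set (EuclideanSpace ℝ (Fin D))) (KY : Set (EuclideanSpace ℝ (Fin E)))
    (hKX : IsCompact KX) (hKY : IsCompact KY) (hαK : α KXᶜ = 0) (hβK : β KYᶜ = 0)
    (hαcentered : ∫ x, x ∂α = 0) (hβcentered : ∫ y, y ∂β = 0)
    (ε : ℝ) (hε : 0 < ε)
    (πt : Measure (EuclideanSpace ℝ (Fin D) × EuclideanSpace ℝ (Fin E)))
    (hπt : πt ∈ couplings α β)
    -- the mirror-descent objective, built from the gradient of the GW loss at `π_t`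
    (G : Measure (EuclideanSpace ℝ (Fin D) × EuclideanSpace ℝ (Fin E)) → EReal)
    (hG : ∀ π, G π =
      ((∫ p, (2 * ∫ q, (‖p.1 - q.1‖ ^ 2 - ‖p.2 - q.2‖ ^ 2) ^ 2 ∂πt) ∂π : ℝ) : EReal)
        + (ε : EReal) * klE π (α.prod β))
    -- the entropic OT objective for the cost `c_{Γ_t}` with `Γ_t = ∫ x yᵀ dπ_t`
    (F : Measure (EuclideanSpace ℝ (Fin D) × EuclideanSpace ℝ (Fin E)) → EReal)
    (hF : ∀ π, F π =
      ((∫ p, (-16 * ∑ i, ∑ j, (∫ q, q.1 i * q.2 j ∂πt) * (p.1 i * p.2 j)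
          - 4 * ‖p.1‖ ^ 2 * ‖p.2‖ ^ 2) ∂π : ℝ) : EReal)
        + (ε : EReal) * klE π (α.prod β)) :
    ∃ k : ℝ, (∀ π ∈ couplings α β, G π = F π + (k : EReal)) ∧
      ∀ π₀ ∈ couplings α β,
        ((∀ π ∈ couplings α β, F π₀ ≤ F π) ↔ (∀ π ∈ couplings α β, G π₀ ≤ G π)) := by
  obtain ⟨hπt1, hπt2⟩ := hπt
  haveI : IsProbabilityMeasure πt := mde_prob πt α hπt1
  have hπtK : πt (KX ×ˢ KY)ᶜ = 0 :=
    mde_supp πt α β KX KY hKX.isClosed hKY.isClosed hαK hβK hπt1 hπt2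
  have hintπt : ∀ f : EuclideanSpace ℝ (Fin D) × EuclideanSpace ℝ (Fin E) → ℝ,
      Continuous f → Integrable f πt :=
    fun f hf => mde_integ_cs πt (hKX.prod hKY) hπtK hf
  have hfst : ∫ q, q.1 ∂πt = 0 := by
    calc ∫ q, q.1 ∂πt = ∫ x, x ∂(πt.map Prod.fst) :=
          (integral_map measurable_fst.aemeasurable aestronglyMeasurable_id).symm
      _ = 0 := by rw [hπt1, hαcentered]
  have hsnd : ∫ q, q.2 ∂πt = 0 := by
    calc ∫ q, q.2 ∂πt = ∫ y, y ∂(πt.map Prod.snd) :=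
          (integral_map measurable_snd.aemeasurable aestronglyMeasurable_id).symm
      _ = 0 := by rw [hπt2, hβcentered]
  have hm1 : ∀ i, ∫ q, q.1 i ∂πt = 0 := by
    intro i
    have hI : Integrable (fun q : EuclideanSpace ℝ (Fin D) × EuclideanSpace ℝ (Fin E) => q.1) πt :=
      mde_integ_cs πt (hKX.prod hKY) hπtK continuous_fst
    have := (EuclideanSpace.proj (𝕜 := ℝ) i).integral_comp_comm hI
    simpa [hfst] using this
  have hm2 : ∀ j, ∫ q, q.2 j ∂πt = 0 := by
    intro j
    have hI : Integrable (fun q : EuclideanSpace ℝ (Fin D) × EuclideanSpace ℝ (Fin E) => q.2) πt :=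
      mde_integ_cs πt (hKX.prod hKY) hπtK continuous_snd
    have := (EuclideanSpace.proj (𝕜 := ℝ) j).integral_comp_comm hI
    simpa [hsnd] using this
  set f : EuclideanSpace ℝ (Fin D) → ℝ := fun x =>
    2*‖x‖^4 + 2*(∫ q, (‖q.1‖^2-‖q.2‖^2)^2 ∂πt)
      + 8*∑ i, ∑ j, (∫ q, q.1 i * q.1 j ∂πt)*(x i * x j)
      - 8*∑ i, (∫ q, (‖q.1‖^2-‖q.2‖^2) * q.1 i ∂πt)*(x i)
      + 4*(∫ q, (‖q.1‖^2-‖q.2‖^2) ∂πt)*‖x‖^2 with hfdef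
  set h : EuclideanSpace ℝ (Fin E) → ℝ := fun y =>
    2*‖y‖^4 + 8*∑ i, ∑ j, (∫ q, q.2 i * q.2 j ∂πt)*(y i * y j)
      + 8*∑ j, (∫ q, (‖q.1‖^2-‖q.2‖^2) * q.2 j ∂πt)*(y j)
      - 4*(∫ q, (‖q.1‖^2-‖q.2‖^2) ∂πt)*‖y‖^2 with hhdef
  have hfc : Continuous f := by rw [hfdef]; fun_prop
  have hhc : Continuous h := by rw [hhdef]; fun_prop
  set k : ℝ := (∫ x, f x ∂α) + (∫ y, h y ∂β) with hkdef
  have hmain : ∀ π ∈ couplings α β, G π = F π + (k : EReal) := by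
    intro π hπ
    obtain ⟨hπ1, hπ2⟩ := hπ
    haveI : IsProbabilityMeasure π := mde_prob π α hπ1
    have hπK : π (KX ×ˢ KY)ᶜ = 0 :=
      mde_supp π α β KX KY hKX.isClosed hKY.isClosed hαK hβK hπ1 hπ2
    have hintπ : ∀ g : EuclideanSpace ℝ (Fin D) × EuclideanSpace ℝ (Fin E) → ℝ,
        Continuous g → Integrable g π :=
      fun g hg => mde_integ_cs π (hKX.prod hKY) hπK hg
    have hpt : ∀ p : EuclideanSpace ℝ (Fin D) × EuclideanSpace ℝ (Fin E),
        (2 * ∫ q, (‖p.1 - q.1‖ ^ 2 - ‖p.2 - q.2‖ ^ 2) ^ 2 ∂πt)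
        = (-16 * ∑ i, ∑ j, (∫ q, q.1 i * q.2 j ∂πt) * (p.1 i * p.2 j)
            - 4 * ‖p.1‖ ^ 2 * ‖p.2‖ ^ 2) + f p.1 + h p.2 :=
      fun p => mde_key πt hintπt hm1 hm2 p.1 p.2
    have icE : Integrable (fun p : EuclideanSpace ℝ (Fin D) × EuclideanSpace ℝ (Fin E) =>
        -16 * ∑ i, ∑ j, (∫ q, q.1 i * q.2 j ∂πt) * (p.1 i * p.2 j)
          - 4 * ‖p.1‖ ^ 2 * ‖p.2‖ ^ 2) π := hintπ _ (by fun_prop)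
    have iff1 : Integrable (fun p : EuclideanSpace ℝ (Fin D) × EuclideanSpace ℝ (Fin E) =>
        f p.1) π := hintπ _ (hfc.comp continuous_fst)
    have ihh : Integrable (fun p : EuclideanSpace ℝ (Fin D) × EuclideanSpace ℝ (Fin E) =>
        h p.2) π := hintπ _ (hhc.comp continuous_snd)
    have pre : Integrable (fun p : EuclideanSpace ℝ (Fin D) × EuclideanSpace ℝ (Fin E) =>
        (-16 * ∑ i, ∑ j, (∫ q, q.1 i * q.2 j ∂πt) * (p.1 i * p.2 j)
          - 4 * ‖p.1‖ ^ 2 * ‖p.2‖ ^ 2) + f p.1) π := icE.add iff1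
    have hfmap : ∫ p, f p.1 ∂π = ∫ x, f x ∂α := by
      calc ∫ p, f p.1 ∂π = ∫ x, f x ∂(π.map Prod.fst) :=
            (integral_map measurable_fst.aemeasurable
              (hfc.aestronglyMeasurable)).symm
        _ = ∫ x, f x ∂α := by rw [hπ1]
    have hhmap : ∫ p, h p.2 ∂π = ∫ y, h y ∂β := by
      calc ∫ p, h p.2 ∂π = ∫ y, h y ∂(π.map Prod.snd) :=
            (integral_map measurable_snd.aemeasurable
              (hhc.aestronglyMeasurable)).symm
        _ = ∫ y, h y ∂β := by rw [hπ2]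
    have split : ∫ p, (2 * ∫ q, (‖p.1 - q.1‖ ^ 2 - ‖p.2 - q.2‖ ^ 2) ^ 2 ∂πt) ∂π
        = (∫ p, (-16 * ∑ i, ∑ j, (∫ q, q.1 i * q.2 j ∂πt) * (p.1 i * p.2 j)
            - 4 * ‖p.1‖ ^ 2 * ‖p.2‖ ^ 2) ∂π) + k := by
      rw [integral_congr_ae (Filter.Eventually.of_forall hpt)]
      rw [integral_add pre ihh, integral_add icE iff1, hfmap, hhmap, hkdef]
      ring
    rw [hG π, hF π, split, EReal.coe_add]
    exact add_right_comm _ _ _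
  refine ⟨k, hmain, ?_⟩
  intro π₀ hπ₀
  constructor
  · intro hmin π hπ
    rw [hmain π₀ hπ₀, hmain π hπ]
    exact add_le_add_left (hmin π hπ) _
  · intro hmin π hπ
    have hle := hmin π hπ
    rw [hmain π₀ hπ₀, hmain π hπ] at hle
    exact ((EReal.addLECancellable_coe _).add_le_add_iff_right).mp hle
end

section
/- Let α be a compactly supported centered Borel probability measure on ℝ^D, β a compactly supported centered Borel probability measure on ℝ^E, and ε > 0. Define the dual function D_ε : ℝ^{D×E} → ℝ by D_ε(Γ) = ‖Γ‖_F² + (1/8)·OT_ε^Γ(α,β). If π ∈ Π(α,β) attains the infimum defining OT_ε^Γ(α,β), then D_ε is differentiable at Γ with gradient (with respect to the Frobenius inner product) equal to 2·Γ − 2·∫ x yᵀ dπ(x,y). -/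
open MeasureTheory Classical

/-- The entropic OT cost `OT_ε^Γ(α,β)` for the cost
`c_Γ(x,y) = -16 ⟨Γ, x yᵀ⟩_F - 4 ‖x‖² ‖y‖²`, where the matrix `Γ` is encoded as an
element of the Euclidean (Frobenius) space `EuclideanSpace ℝ (Fin D × Fin E)`. -/
noncomputable def otGamma {D E : ℕ}
    (α : Measure (EuclideanSpace ℝ (Fin D))) (β : Measure (EuclideanSpace ℝ (Fin E)))
    (ε : ℝ) (Γ : EuclideanSpace ℝ (Fin D × Fin E)) : EReal :=
  ⨅ π ∈ couplings α β,
    ((∫ p, (-16 * ∑ q : Fin D × Fin E, Γ q * (p.1 q.1 * p.2 q.2)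
        - 4 * ‖p.1‖ ^ 2 * ‖p.2‖ ^ 2) ∂π : ℝ) : EReal)
      + (ε : EReal) * klE π (α.prod β)

/-! ### Auxiliary pointwise real inequalities -/

section PointwiseAux

private lemma philb (t : ℝ) (ht : 0 ≤ t) : t - 1 ≤ t * Real.log t := by
  rcases eq_or_lt_of_le ht with h | h
  · simp [← h]
  · have h1 : Real.log t⁻¹ ≤ t⁻¹ - 1 := Real.log_le_sub_one_of_pos (by positivity)
    rw [Real.log_inv] at h1
    have h2 := mul_le_mul_of_nonneg_left h1 h.le
    have h3 : t * t⁻¹ = 1 := mul_inv_cancel₀ h.ne'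
    nlinarith

private lemma phi_sqrt (t : ℝ) (ht : 0 < t) : 2 * t - 2 * Real.sqrt t ≤ t * Real.log t := by
  have hr : Real.sqrt t ^ 2 = t := Real.sq_sqrt ht.le
  have hrpos : 0 < Real.sqrt t := Real.sqrt_pos.2 ht
  have h1 : Real.log (Real.sqrt t)⁻¹ ≤ (Real.sqrt t)⁻¹ - 1 :=
    Real.log_le_sub_one_of_pos (by positivity)
  rw [Real.log_inv] at h1
  have h2 : Real.log (Real.sqrt t) = Real.log t / 2 := Real.log_sqrt ht.le
  have h3 : 1 - (Real.sqrt t)⁻¹ ≤ Real.log t / 2 := by rw [← h2]; linarith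
  have h4 := mul_le_mul_of_nonneg_left h3 ht.le
  have h5 : t * (Real.sqrt t)⁻¹ = Real.sqrt t := by
    field_simp
    exact hr.symm
  nlinarith

private lemma phi_quad (t : ℝ) (ht : 0 ≤ t) (ht2 : t ≤ 2) :
    (t - 1) ^ 2 / 8 ≤ t * Real.log t - t + 1 := by
  rcases eq_or_lt_of_le ht with h | h
  · simp [← h]; norm_num
  · have hr : Real.sqrt t ^ 2 = t := Real.sq_sqrt ht
    have hrpos : 0 < Real.sqrt t := Real.sqrt_pos.2 h
    have key := phi_sqrt t h
    have hr32 : Real.sqrt t ≤ 3 / 2 := by nlinarith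
    nlinarith [sq_nonneg (Real.sqrt t - 1), sq_nonneg ((Real.sqrt t - 1) * (Real.sqrt t + 1))]

private lemma phi_scale (A m : ℝ) (hA : 0 ≤ A) (hm : 0 < m) :
    (A * m) * Real.log (A * m) = m * (A * Real.log A) + A * m * Real.log m := by
  rcases eq_or_lt_of_le hA with h | h
  · simp [← h]
  · rw [Real.log_mul h.ne' hm.ne']; ring

private lemma defect_bounds (a b : ℝ) (ha : 0 ≤ a) (hb : 0 ≤ b) :
    0 ≤ a * Real.log a / 2 + b * Real.log b / 2 - ((a + b) / 2) * Real.log ((a + b) / 2)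
    ∧ (a - b) ^ 2 ≤ 32 * ((a + b) / 2)
        * (a * Real.log a / 2 + b * Real.log b / 2 - ((a + b) / 2) * Real.log ((a + b) / 2)) := by
  set m := (a + b) / 2 with hmdef
  rcases eq_or_lt_of_le (by positivity : (0:ℝ) ≤ m) with hm | hm
  · have ha0 : a = 0 := by linarith
    have hb0 : b = 0 := by linarith
    rw [hmdef, ha0, hb0]; norm_num
  · set A := a / m with hAdef
    set B := b / m with hBdef
    have hA : 0 ≤ A := by positivity
    have hB : 0 ≤ B := by positivity
    have hAB : A + B = 2 := by rw [hAdef, hBdef]; field_simp; rw [hmdef]; ring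
    have haa : a = A * m := by rw [hAdef]; field_simp
    have hbb : b = B * m := by rw [hBdef]; field_simp
    have hd : a * Real.log a / 2 + b * Real.log b / 2 - m * Real.log m
        = (m / 2) * (A * Real.log A + B * Real.log B) := by
      have ea : a * Real.log a = m * (A * Real.log A) + A * m * Real.log m := by
        rw [haa]; exact phi_scale A m hA hm
      have eb : b * Real.log b = m * (B * Real.log B) + B * m * Real.log m := by
        rw [hbb]; exact phi_scale B m hB hm
      rw [ea, eb]
      linear_combination (m * Real.log m / 2) * hAB
    have hqA := phi_quad A hA (by linarith)
    have hqB := phi_quad B hB (by linarith)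
    have hBA : B - 1 = -(A - 1) := by linarith
    have hsum : (A - 1) ^ 2 / 4 ≤ A * Real.log A + B * Real.log B := by nlinarith
    constructor
    · rw [hd]
      have := mul_le_mul_of_nonneg_left hsum (by positivity : (0:ℝ) ≤ m / 2)
      nlinarith [sq_nonneg (A - 1)]
    · rw [hd]
      have hab : a - b = 2 * m * (A - 1) := by rw [haa, hbb]; nlinarith
      rw [hab]
      have := mul_le_mul_of_nonneg_left hsum (by positivity : (0:ℝ) ≤ 16 * m ^ 2)
      nlinarith

private lemma pointwise_P (a b s : ℝ) (ha : 0 ≤ a) (hb : 0 ≤ b) (hs : 0 < s) :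
    |a - b| ≤ s * (a + b) / 4
      + (16 / s) * (a * Real.log a / 2 + b * Real.log b / 2
        - ((a + b) / 2) * Real.log ((a + b) / 2)) := by
  obtain ⟨hd0, hd1⟩ := defect_bounds a b ha hb
  set d := a * Real.log a / 2 + b * Real.log b / 2 - ((a + b) / 2) * Real.log ((a + b) / 2)
    with hddef
  clear_value d
  rcases eq_or_lt_of_le (by positivity : (0:ℝ) ≤ (a + b) / 2) with hm0 | hm0
  · have ha0 : a = 0 := by linarith
    have hb0 : b = 0 := by linarith
    rw [ha0, hb0]
    simp
    positivity
  · have key : |a - b| ≤ s * ((a + b) / 2) / 2 + (a - b) ^ 2 / (2 * s * ((a + b) / 2)) := by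
      rcases abs_cases (a - b) with ⟨h1, _⟩ | ⟨h1, _⟩ <;>
      · rw [h1]
        rw [div_add_div _ _ (by positivity) (by positivity), le_div_iff₀ (by positivity)]
        nlinarith [sq_nonneg (s * ((a + b) / 2) - (a - b)), sq_nonneg (s * ((a + b) / 2) + (a - b))]
    have h2 : (a - b) ^ 2 / (2 * s * ((a + b) / 2))
        ≤ (32 * ((a + b) / 2) * d) / (2 * s * ((a + b) / 2)) := by gcongr
    have h3 : (32 * ((a + b) / 2) * d) / (2 * s * ((a + b) / 2)) = (16 / s) * d := by
      rw [div_eq_iff (by positivity : (2 * s * ((a + b) / 2)) ≠ 0)]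
      field_simp [hs.ne']
      ring
    have h4 : s * ((a + b) / 2) / 2 = s * (a + b) / 4 := by ring
    linarith

end PointwiseAux

/-! ### Euclidean space helpers -/

section EuclideanAux

private lemma sum_sq_eq_norm_sq {n : Type*} [Fintype n] (x : EuclideanSpace ℝ n) :
    ∑ i, x i ^ 2 = ‖x‖ ^ 2 := by
  rw [EuclideanSpace.norm_eq, Real.sq_sqrt (by positivity)]
  congr 1
  ext i
  rw [Real.norm_eq_abs, sq_abs]

private lemma abs_coord_le_norm {n : Type*} [Fintype n] (x : EuclideanSpace ℝ n) (i : n) :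
    |x i| ≤ ‖x‖ := by
  have h1 : x i ^ 2 ≤ ∑ j, x j ^ 2 :=
    Finset.single_le_sum (fun j _ => sq_nonneg (x j)) (Finset.mem_univ i)
  rw [sum_sq_eq_norm_sq] at h1
  have h2 : |x i| ^ 2 ≤ ‖x‖ ^ 2 := by rw [sq_abs]; exact h1
  exact abs_le_of_sq_le_sq' h2 (norm_nonneg x) |>.2

private lemma sum_abs_le_card_norm {n : Type*} [Fintype n] (x : EuclideanSpace ℝ n) :
    ∑ i, |x i| ≤ (Fintype.card n : ℝ) * ‖x‖ := by
  calc ∑ i, |x i| ≤ ∑ _i : n, ‖x‖ := Finset.sum_le_sum fun i _ => abs_coord_le_norm x i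
    _ = (Fintype.card n : ℝ) * ‖x‖ := by rw [Finset.sum_const, Finset.card_univ, nsmul_eq_mul]

end EuclideanAux

/-! ### Generic measure-theoretic lemmas about `klE` -/

section Generic
open scoped ENNReal NNReal
variable {Z : Type*} [MeasurableSpace Z]

private lemma int_phi_of_llr {ν μ : Measure Z} [IsProbabilityMeasure ν] [IsProbabilityMeasure μ]
    (hac : ν ≪ μ) (hint : Integrable (llr ν μ) ν) :
    Integrable (fun z => (ν.rnDeriv μ z).toReal * Real.log (ν.rnDeriv μ z).toReal) μ := by
  have := (integrable_rnDeriv_smul_iff (f := llr ν μ) hac).mpr hint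
  simpa [llr, smul_eq_mul] using this

private lemma integral_phi_eq_llr {ν μ : Measure Z} [IsProbabilityMeasure ν]
    [IsProbabilityMeasure μ] (hac : ν ≪ μ) :
    ∫ z, (ν.rnDeriv μ z).toReal * Real.log (ν.rnDeriv μ z).toReal ∂μ = ∫ z, llr ν μ z ∂ν := by
  have := integral_rnDeriv_smul (f := llr ν μ) hac
  simpa [llr, smul_eq_mul] using this

private lemma gibbs {ν μ : Measure Z} [IsProbabilityMeasure ν] [IsProbabilityMeasure μ]
    (hac : ν ≪ μ) (hint : Integrable (llr ν μ) ν) : 0 ≤ ∫ z, llr ν μ z ∂ν := by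
  rw [← integral_phi_eq_llr hac]
  have h1 : Integrable (fun z => (ν.rnDeriv μ z).toReal - 1) μ :=
    (Measure.integrable_toReal_rnDeriv).sub (integrable_const 1)
  have h2 : ∫ z, ((ν.rnDeriv μ z).toReal - 1) ∂μ = 0 := by
    rw [integral_sub Measure.integrable_toReal_rnDeriv (integrable_const 1),
      Measure.integral_toReal_rnDeriv hac]
    simp
  have h3 : ∫ z, ((ν.rnDeriv μ z).toReal - 1) ∂μ
      ≤ ∫ z, (ν.rnDeriv μ z).toReal * Real.log (ν.rnDeriv μ z).toReal ∂μ :=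
    integral_mono h1 (int_phi_of_llr hac hint) (fun z => philb _ ENNReal.toReal_nonneg)
  linarith

private lemma klE_nonneg (ν μ : Measure Z) [IsProbabilityMeasure ν] [IsProbabilityMeasure μ] :
    (0 : EReal) ≤ klE ν μ := by
  unfold klE
  split_ifs with h
  · exact_mod_cast gibbs h.1 h.2
  · exact le_top

private lemma klE_self (μ : Measure Z) [IsProbabilityMeasure μ] : klE μ μ = 0 := by
  have hll : llr μ μ =ᵐ[μ] 0 := by
    filter_upwards [Measure.rnDeriv_self μ] with z hz
    simp [llr, hz]
  have hint : Integrable (llr μ μ) μ := by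
    rw [integrable_congr hll]; exact integrable_zero _ _ _
  unfold klE
  rw [if_pos ⟨Measure.AbsolutelyContinuous.rfl, hint⟩, integral_congr_ae hll]
  simp

private lemma ereal_mul_nonneg {ε : ℝ} (hε : 0 ≤ ε) {k : EReal} (hk : 0 ≤ k) :
    (0 : EReal) ≤ (ε : EReal) * k := by
  rcases eq_or_lt_of_le hε with h | h
  · simp [← h]
  · induction k with
    | bot => simp at hk
    | coe x =>
        rw [← EReal.coe_mul]
        have : (0:ℝ) ≤ x := by exact_mod_cast hk
        exact_mod_cast mul_nonneg hε this
    | top => rw [EReal.coe_mul_top_of_pos h]; exact le_top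

private lemma klE_ne_top_iff {ν μ : Measure Z} (h : klE ν μ ≠ ⊤) :
    ν ≪ μ ∧ Integrable (llr ν μ) ν ∧ klE ν μ = ((∫ z, llr ν μ z ∂ν : ℝ) : EReal) := by
  unfold klE at *
  split_ifs at * with hc
  · exact ⟨hc.1, hc.2, rfl⟩
  · simp at h

private lemma klE_mid {μ ν₁ ν₂ : Measure Z} [IsProbabilityMeasure μ] [IsProbabilityMeasure ν₁]
    [IsProbabilityMeasure ν₂]
    (h1 : ν₁ ≪ μ) (h2 : ν₂ ≪ μ) (h1i : Integrable (llr ν₁ μ) ν₁)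
    (h2i : Integrable (llr ν₂ μ) ν₂) :
    ∃ KM : ℝ, klE ((2⁻¹ : ℝ≥0∞) • ν₁ + (2⁻¹ : ℝ≥0∞) • ν₂) μ = (KM : EReal) ∧
      ∀ s : ℝ, 0 < s →
        ∫ z, |(ν₁.rnDeriv μ z).toReal - (ν₂.rnDeriv μ z).toReal| ∂μ
          ≤ s / 2 + (16 / s) * ((∫ z, llr ν₁ μ z ∂ν₁) / 2 + (∫ z, llr ν₂ μ z ∂ν₂) / 2 - KM) := by
  set f : Z → ℝ := fun z => (ν₁.rnDeriv μ z).toReal with hfdef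
  set g : Z → ℝ := fun z => (ν₂.rnDeriv μ z).toReal with hgdef
  have hf_int : Integrable f μ := Measure.integrable_toReal_rnDeriv
  have hg_int : Integrable g μ := Measure.integrable_toReal_rnDeriv
  have hf1 : ∫ z, f z ∂μ = 1 := by
    rw [hfdef, Measure.integral_toReal_rnDeriv h1]; simp
  have hg1 : ∫ z, g z ∂μ = 1 := by
    rw [hgdef, Measure.integral_toReal_rnDeriv h2]; simp
  have hφf := int_phi_of_llr h1 h1i
  have hφg := int_phi_of_llr h2 h2i
  set ρ : Measure Z := (2⁻¹ : ℝ≥0∞) • ν₁ + (2⁻¹ : ℝ≥0∞) • ν₂ with hρdef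
  haveI hfin1 : IsFiniteMeasure ((2⁻¹ : ℝ≥0∞) • ν₁) := by
    constructor
    simp [Measure.smul_apply]
  haveI hfin2 : IsFiniteMeasure ((2⁻¹ : ℝ≥0∞) • ν₂) := by
    constructor
    simp [Measure.smul_apply]
  haveI hρprob : IsProbabilityMeasure ρ := by
    constructor
    rw [hρdef]
    simp [Measure.add_apply, Measure.smul_apply]
    rw [ENNReal.inv_two_add_inv_two]
  have hρac : ρ ≪ μ := by
    refine Measure.AbsolutelyContinuous.mk fun s hms hs0 => ?_
    rw [hρdef]
    simp [Measure.add_apply, Measure.smul_apply, h1 hs0, h2 hs0]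
  have hm_ae : (fun z => (ρ.rnDeriv μ z).toReal) =ᵐ[μ] fun z => (f z + g z) / 2 := by
    have hadd := Measure.rnDeriv_add ((2⁻¹ : ℝ≥0∞) • ν₁) ((2⁻¹ : ℝ≥0∞) • ν₂) μ
    have hs1 := Measure.rnDeriv_smul_left_of_ne_top ν₁ μ (r := (2⁻¹ : ℝ≥0∞)) (by norm_num)
    have hs2 := Measure.rnDeriv_smul_left_of_ne_top ν₂ μ (r := (2⁻¹ : ℝ≥0∞)) (by norm_num)
    filter_upwards [hadd, hs1, hs2, Measure.rnDeriv_ne_top ν₁ μ, Measure.rnDeriv_ne_top ν₂ μ]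
      with z hz1 hz2 hz3 hz4 hz5
    rw [hρdef] at *
    rw [hz1]
    simp only [Pi.add_apply, hz2, hz3, Pi.smul_apply, smul_eq_mul]
    rw [ENNReal.toReal_add (by finiteness) (by finiteness)]
    rw [ENNReal.toReal_mul, ENNReal.toReal_mul]
    simp [hfdef, hgdef]
    ring
  set m : Z → ℝ := fun z => (f z + g z) / 2 with hmdef
  have hm_meas : Measurable m := by
    apply Measurable.div_const
    exact ((Measure.measurable_rnDeriv ν₁ μ).ennreal_toReal.add
      (Measure.measurable_rnDeriv ν₂ μ).ennreal_toReal)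
  have hφm_int : Integrable (fun z => m z * Real.log (m z)) μ := by
    refine Integrable.mono' (((hφf.abs.add hφg.abs).div_const 2).add (integrable_const 1))
      (hm_meas.mul (Real.measurable_log.comp hm_meas)).aestronglyMeasurable ?_
    refine Filter.Eventually.of_forall fun z => ?_
    have hfz : 0 ≤ f z := ENNReal.toReal_nonneg
    have hgz : 0 ≤ g z := ENNReal.toReal_nonneg
    have hub := (defect_bounds (f z) (g z) hfz hgz).1
    have hlb := philb (m z) (by rw [hmdef]; positivity)
    rw [Real.norm_eq_abs, abs_le]
    constructor
    · have : 0 ≤ m z := by rw [hmdef]; positivity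
      have h0 : (0:ℝ) ≤ (|f z * Real.log (f z)| + |g z * Real.log (g z)|) / 2 := by positivity
      simp only [Pi.add_apply]
      nlinarith
    · have hle : m z * Real.log (m z)
          ≤ f z * Real.log (f z) / 2 + g z * Real.log (g z) / 2 := by
        rw [hmdef]; linarith
      have h1' : f z * Real.log (f z) ≤ |f z * Real.log (f z)| := le_abs_self _
      have h2' : g z * Real.log (g z) ≤ |g z * Real.log (g z)| := le_abs_self _
      simp only [Pi.add_apply]
      linarith
  have hρ_llr_int : Integrable (llr ρ μ) ρ := by
    rw [← integrable_rnDeriv_smul_iff hρac]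
    refine (hφm_int.congr ?_)
    filter_upwards [hm_ae] with z hz
    simp only [llr, smul_eq_mul, hz]
  have hKMμ : ∫ z, llr ρ μ z ∂ρ = ∫ z, m z * Real.log (m z) ∂μ := by
    rw [← integral_phi_eq_llr hρac]
    apply integral_congr_ae
    filter_upwards [hm_ae] with z hz
    rw [hz]
  refine ⟨∫ z, llr ρ μ z ∂ρ, ?_, ?_⟩
  · unfold klE
    rw [if_pos ⟨hρac, hρ_llr_int⟩]
  · intro s hs
    have hmono : ∫ z, |f z - g z| ∂μ
        ≤ ∫ z, (s * (f z + g z) / 4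
          + (16 / s) * (f z * Real.log (f z) / 2 + g z * Real.log (g z) / 2
            - m z * Real.log (m z))) ∂μ := by
      refine integral_mono (hf_int.sub hg_int).abs ?_ ?_
      · apply Integrable.add
        · exact (((hf_int.add hg_int).const_mul s).div_const 4)
        · exact (((hφf.div_const 2).add (hφg.div_const 2)).sub hφm_int).const_mul _
      · intro z
        have := pointwise_P (f z) (g z) s ENNReal.toReal_nonneg ENNReal.toReal_nonneg hs
        simpa [hmdef] using this
    rw [hKMμ]
    have hA : Integrable (fun z => s * (f z + g z) / 4) μ := by
      exact ((hf_int.add hg_int).const_mul s).div_const 4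
    have hφf' : Integrable (fun z => f z * Real.log (f z)) μ := by exact hφf
    have hφg' : Integrable (fun z => g z * Real.log (g z)) μ := by exact hφg
    have hφf2 : Integrable (fun z => f z * Real.log (f z) / 2) μ := hφf'.div_const 2
    have hφg2 : Integrable (fun z => g z * Real.log (g z) / 2) μ := hφg'.div_const 2
    have hB : Integrable (fun z => f z * Real.log (f z) / 2 + g z * Real.log (g z) / 2) μ :=
      hφf2.add hφg2
    have hBm : Integrable (fun z => f z * Real.log (f z) / 2 + g z * Real.log (g z) / 2
        - m z * Real.log (m z)) μ := hB.sub hφm_int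
    have hB' : Integrable (fun z => (16 / s) * (f z * Real.log (f z) / 2
        + g z * Real.log (g z) / 2 - m z * Real.log (m z))) μ := hBm.const_mul _
    have hllr1 : ∫ z, f z * Real.log (f z) ∂μ = ∫ z, llr ν₁ μ z ∂ν₁ := by
      exact integral_phi_eq_llr h1
    have hllr2 : ∫ z, g z * Real.log (g z) ∂μ = ∫ z, llr ν₂ μ z ∂ν₂ := by
      exact integral_phi_eq_llr h2
    refine le_trans hmono ?_
    rw [integral_add hA hB', integral_const_mul, integral_sub hB hφm_int,
      integral_add hφf2 hφg2, integral_div, integral_div, integral_div, integral_const_mul,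
      integral_add hf_int hg_int, hf1, hg1, hllr1, hllr2]
    apply le_of_eq
    ring

end Generic

/-! ### Couplings and the cost function -/

noncomputable def costFn {D E : ℕ} (Γ : EuclideanSpace ℝ (Fin D × Fin E))
    (p : EuclideanSpace ℝ (Fin D) × EuclideanSpace ℝ (Fin E)) : ℝ :=
  -16 * ∑ q : Fin D × Fin E, Γ q * (p.1 q.1 * p.2 q.2) - 4 * ‖p.1‖ ^ 2 * ‖p.2‖ ^ 2

section CP
set_option linter.unusedSectionVars false
variable {D E : ℕ}
  (α : Measure (EuclideanSpace ℝ (Fin D))) (β : Measure (EuclideanSpace ℝ (Fin E)))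
  [IsProbabilityMeasure α] [IsProbabilityMeasure β]

private lemma coupling_isProb {π : Measure (EuclideanSpace ℝ (Fin D) × EuclideanSpace ℝ (Fin E))}
    (h : π ∈ couplings α β) : IsProbabilityMeasure π := by
  constructor
  have h1 := congrArg (fun m : Measure (EuclideanSpace ℝ (Fin D)) => m Set.univ) h.1
  rw [Measure.map_apply measurable_fst MeasurableSet.univ, Set.preimage_univ] at h1
  rw [h1, measure_univ]

private lemma coupling_supp {KX : Set (EuclideanSpace ℝ (Fin D))}
    {KY : Set (EuclideanSpace ℝ (Fin E))} (hKXm : MeasurableSet KX) (hKYm : MeasurableSet KY)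
    (hαK : α KXᶜ = 0) (hβK : β KYᶜ = 0)
    {π : Measure (EuclideanSpace ℝ (Fin D) × EuclideanSpace ℝ (Fin E))}
    (h : π ∈ couplings α β) : ∀ᵐ p ∂π, p.1 ∈ KX ∧ p.2 ∈ KY := by
  have h1 : π (Prod.fst ⁻¹' KXᶜ) = 0 := by
    rw [← Measure.map_apply measurable_fst hKXm.compl, h.1]; exact hαK
  have h2 : π (Prod.snd ⁻¹' KYᶜ) = 0 := by
    rw [← Measure.map_apply measurable_snd hKYm.compl, h.2]; exact hβK
  rw [ae_iff]
  refine measure_mono_null (fun p hp => ?_) (measure_union_null h1 h2)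
  simp only [Set.mem_setOf_eq, not_and_or] at hp
  rcases hp with hp | hp
  · exact Or.inl hp
  · exact Or.inr hp

private lemma prod_is_coupling : α.prod β ∈ couplings α β := by
  constructor
  · rw [Measure.map_fst_prod]; simp
  · rw [Measure.map_snd_prod]; simp

private lemma coordFn_continuous (q : Fin D × Fin E) :
    Continuous (fun p : EuclideanSpace ℝ (Fin D) × EuclideanSpace ℝ (Fin E) =>
      p.1 q.1 * p.2 q.2) := by
  exact ((EuclideanSpace.proj q.1).continuous.comp continuous_fst).mul
    ((EuclideanSpace.proj q.2).continuous.comp continuous_snd)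

private lemma costFn_continuous (Γ : EuclideanSpace ℝ (Fin D × Fin E)) :
    Continuous (costFn Γ) := by
  unfold costFn
  refine Continuous.sub (Continuous.mul continuous_const ?_) ?_
  · exact continuous_finset_sum _ fun q _ => continuous_const.mul (coordFn_continuous q)
  · exact ((continuous_const.mul (continuous_fst.norm.pow 2)).mul (continuous_snd.norm.pow 2))

private lemma costFn_bound (Γ : EuclideanSpace ℝ (Fin D × Fin E)) {RX RY : ℝ}
    (hRX : 0 ≤ RX) (hRY : 0 ≤ RY)
    {p : EuclideanSpace ℝ (Fin D) × EuclideanSpace ℝ (Fin E)}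
    (h1 : ‖p.1‖ ≤ RX) (h2 : ‖p.2‖ ≤ RY) :
    |costFn Γ p| ≤ 16 * (∑ q : Fin D × Fin E, |Γ q|) * (RX * RY) + 4 * RX ^ 2 * RY ^ 2 := by
  unfold costFn
  have hq : ∀ q : Fin D × Fin E, |Γ q * (p.1 q.1 * p.2 q.2)| ≤ |Γ q| * (RX * RY) := by
    intro q
    rw [abs_mul, abs_mul]
    have e1 : |p.1 q.1| ≤ RX := le_trans (abs_coord_le_norm p.1 q.1) h1
    have e2 : |p.2 q.2| ≤ RY := le_trans (abs_coord_le_norm p.2 q.2) h2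
    have := mul_le_mul e1 e2 (abs_nonneg _) hRX
    exact mul_le_mul_of_nonneg_left this (abs_nonneg _)
  have hsum : |∑ q : Fin D × Fin E, Γ q * (p.1 q.1 * p.2 q.2)|
      ≤ (∑ q : Fin D × Fin E, |Γ q|) * (RX * RY) := by
    refine le_trans (Finset.abs_sum_le_sum_abs _ _) ?_
    rw [Finset.sum_mul]
    exact Finset.sum_le_sum fun q _ => hq q
  have hn : |4 * ‖p.1‖ ^ 2 * ‖p.2‖ ^ 2| ≤ 4 * RX ^ 2 * RY ^ 2 := by
    rw [abs_of_nonneg (by positivity)]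
    have e1 : ‖p.1‖ ^ 2 ≤ RX ^ 2 := by nlinarith [norm_nonneg p.1]
    have e2 : ‖p.2‖ ^ 2 ≤ RY ^ 2 := by nlinarith [norm_nonneg p.2]
    nlinarith [norm_nonneg p.1, norm_nonneg p.2, sq_nonneg ‖p.1‖]
  calc |(-16) * ∑ q : Fin D × Fin E, Γ q * (p.1 q.1 * p.2 q.2) - 4 * ‖p.1‖ ^ 2 * ‖p.2‖ ^ 2|
      ≤ |(-16) * ∑ q : Fin D × Fin E, Γ q * (p.1 q.1 * p.2 q.2)| + |4 * ‖p.1‖ ^ 2 * ‖p.2‖ ^ 2| :=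
        abs_sub _ _
    _ ≤ 16 * ((∑ q : Fin D × Fin E, |Γ q|) * (RX * RY)) + 4 * RX ^ 2 * RY ^ 2 := by
        rw [abs_mul]
        have h16 : |(-16 : ℝ)| = 16 := by norm_num
        rw [h16]
        nlinarith [hsum, hn, abs_nonneg (∑ q : Fin D × Fin E, Γ q * (p.1 q.1 * p.2 q.2))]
    _ = 16 * (∑ q : Fin D × Fin E, |Γ q|) * (RX * RY) + 4 * RX ^ 2 * RY ^ 2 := by ring

end CP

/-! ### Main theorem -/

open scoped ENNReal NNReal

set_option maxHeartbeats 4000000 in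
/-- the dual function `D_ε(Γ) = ‖Γ‖_F² + (1/8) OT_ε^Γ(α,β)` is
differentiable at any `Γ` where the entropic OT problem has a minimizer `π`, with
gradient `2Γ - 2 ∫ x yᵀ dπ` for the Frobenius inner product. -/
theorem dual_function_gradient {D E : ℕ}
    (α : Measure (EuclideanSpace ℝ (Fin D))) (β : Measure (EuclideanSpace ℝ (Fin E)))
    [IsProbabilityMeasure α] [IsProbabilityMeasure β]
    (KX : Set (EuclideanSpace ℝ (Fin D))) (KY : Set (EuclideanSpace ℝ (Fin E)))
    (hKX : IsCompact KX) (hKY : IsCompact KY) (hαK : α KXᶜ = 0) (hβK : β KYᶜ = 0)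
    (hαcentered : ∫ x, x ∂α = 0) (hβcentered : ∫ y, y ∂β = 0)
    (ε : ℝ) (hε : 0 < ε)
    (Γ : EuclideanSpace ℝ (Fin D × Fin E))
    (π : Measure (EuclideanSpace ℝ (Fin D) × EuclideanSpace ℝ (Fin E)))
    (hπ : π ∈ couplings α β)
    (hopt : ((∫ p, (-16 * ∑ q : Fin D × Fin E, Γ q * (p.1 q.1 * p.2 q.2)
          - 4 * ‖p.1‖ ^ 2 * ‖p.2‖ ^ 2) ∂π : ℝ) : EReal)
        + (ε : EReal) * klE π (α.prod β) = otGamma α β ε Γ) :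
    HasGradientAt
      (fun Γ' : EuclideanSpace ℝ (Fin D × Fin E) =>
        (∑ q : Fin D × Fin E, (Γ' q) ^ 2) + (1 / 8) * (otGamma α β ε Γ').toReal)
      ((WithLp.equiv 2 (Fin D × Fin E → ℝ)).symm
        fun q => 2 * Γ q - 2 * ∫ p, p.1 q.1 * p.2 q.2 ∂π)
      Γ := by
  classical
  have hKXm : MeasurableSet KX := hKX.isClosed.measurableSet
  have hKYm : MeasurableSet KY := hKY.isClosed.measurableSet
  obtain ⟨RX₀, hRX₀⟩ := hKX.isBounded.exists_norm_le
  obtain ⟨RY₀, hRY₀⟩ := hKY.isBounded.exists_norm_le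
  set RX : ℝ := |RX₀| + 1 with hRXdef
  set RY : ℝ := |RY₀| + 1 with hRYdef
  have hRXpos : 0 < RX := by rw [hRXdef]; positivity
  have hRYpos : 0 < RY := by rw [hRYdef]; positivity
  have hRX : ∀ x ∈ KX, ‖x‖ ≤ RX := fun x hx =>
    le_trans (hRX₀ x hx) (by rw [hRXdef]; nlinarith [le_abs_self RX₀])
  have hRY : ∀ y ∈ KY, ‖y‖ ≤ RY := fun y hy =>
    le_trans (hRY₀ y hy) (by rw [hRYdef]; nlinarith [le_abs_self RY₀])
  set B0 : ℝ := RX * RY with hB0def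
  have hB0pos : 0 < B0 := mul_pos hRXpos hRYpos
  set N : ℝ := (Fintype.card (Fin D × Fin E) : ℝ) with hNdef
  have hNnonneg : 0 ≤ N := by rw [hNdef]; positivity
  haveI hμprob : IsProbabilityMeasure (α.prod β) := by infer_instance
  have hμcoup : α.prod β ∈ couplings α β := prod_is_coupling α β
  -- support bound for any coupling
  have hsupp : ∀ π' ∈ couplings α β, ∀ᵐ p ∂π',
      ‖(p : (EuclideanSpace ℝ (Fin D)) × (EuclideanSpace ℝ (Fin E))).1‖ ≤ RX ∧ ‖p.2‖ ≤ RY := by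
    intro π' hc
    filter_upwards [coupling_supp α β hKXm hKYm hαK hβK hc] with p hp
    exact ⟨hRX p.1 hp.1, hRY p.2 hp.2⟩
  -- integrability of the cost and the coordinate functions under any coupling
  set CB : EuclideanSpace ℝ (Fin D × Fin E) → ℝ :=
    fun Γ'' => 16 * (∑ q : Fin D × Fin E, |Γ'' q|) * (RX * RY) + 4 * RX ^ 2 * RY ^ 2 with hCBdef
  have hint_cost : ∀ (Γ'' : EuclideanSpace ℝ (Fin D × Fin E)),
      ∀ π' ∈ couplings α β, Integrable (costFn Γ'') π' := by
    intro Γ'' π' hc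
    haveI := coupling_isProb α β hc
    refine Integrable.mono' (integrable_const (CB Γ''))
      (costFn_continuous Γ'').aestronglyMeasurable ?_
    filter_upwards [hsupp π' hc] with p hp
    rw [Real.norm_eq_abs]
    exact costFn_bound Γ'' hRXpos.le hRYpos.le hp.1 hp.2
  have habs_cost : ∀ (Γ'' : EuclideanSpace ℝ (Fin D × Fin E)),
      ∀ π' ∈ couplings α β, |∫ p, costFn Γ'' p ∂π'| ≤ CB Γ'' := by
    intro Γ'' π' hc
    haveI := coupling_isProb α β hc
    have hconst : ∫ _p, CB Γ'' ∂π' = CB Γ'' := by simp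
    rw [← Real.norm_eq_abs, ← hconst]
    refine norm_integral_le_of_norm_le (integrable_const (CB Γ'')) ?_
    filter_upwards [hsupp π' hc] with p hp
    rw [Real.norm_eq_abs]
    exact costFn_bound Γ'' hRXpos.le hRYpos.le hp.1 hp.2
  have hint_coord : ∀ π' ∈ couplings α β, ∀ q : Fin D × Fin E,
      Integrable (fun p : (EuclideanSpace ℝ (Fin D)) × (EuclideanSpace ℝ (Fin E)) =>
        p.1 q.1 * p.2 q.2) π' := by
    intro π' hc q
    haveI := coupling_isProb α β hc
    refine Integrable.mono' (integrable_const B0)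
      (coordFn_continuous q).aestronglyMeasurable ?_
    filter_upwards [hsupp π' hc] with p hp
    rw [Real.norm_eq_abs, abs_mul]
    exact mul_le_mul (le_trans (abs_coord_le_norm p.1 q.1) hp.1)
      (le_trans (abs_coord_le_norm p.2 q.2) hp.2) (abs_nonneg _) hRXpos.le
  have habs_coord : ∀ π' ∈ couplings α β, ∀ q : Fin D × Fin E,
      |∫ p, p.1 q.1 * p.2 q.2 ∂π'| ≤ B0 := by
    intro π' hc q
    haveI := coupling_isProb α β hc
    have hconst : ∫ _p, B0 ∂π' = B0 := by simp
    rw [← Real.norm_eq_abs, ← hconst]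
    refine norm_integral_le_of_norm_le (integrable_const B0) ?_
    filter_upwards [hsupp π' hc] with p hp
    rw [Real.norm_eq_abs, abs_mul]
    exact mul_le_mul (le_trans (abs_coord_le_norm p.1 q.1) hp.1)
      (le_trans (abs_coord_le_norm p.2 q.2) hp.2) (abs_nonneg _) hRXpos.le
  -- linearity of the cost integral in Γ
  have hlin : ∀ (Γ₁ Γ₂ : EuclideanSpace ℝ (Fin D × Fin E)), ∀ π' ∈ couplings α β,
      ∫ p, costFn Γ₁ p ∂π' = ∫ p, costFn Γ₂ p ∂π'
        - 16 * ∑ q : Fin D × Fin E, (Γ₁ q - Γ₂ q) * ∫ p, p.1 q.1 * p.2 q.2 ∂π' := by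
    intro Γ₁ Γ₂ π' hc
    have key : ∀ p : (EuclideanSpace ℝ (Fin D)) × (EuclideanSpace ℝ (Fin E)),
        costFn Γ₁ p = costFn Γ₂ p
          + ∑ q : Fin D × Fin E, (-16 * (Γ₁ q - Γ₂ q)) * (p.1 q.1 * p.2 q.2) := by
      intro p
      unfold costFn
      have e : ∑ q : Fin D × Fin E, (-16 * (Γ₁ q - Γ₂ q)) * (p.1 q.1 * p.2 q.2)
          = -16 * (∑ q : Fin D × Fin E, Γ₁ q * (p.1 q.1 * p.2 q.2)
              - ∑ q : Fin D × Fin E, Γ₂ q * (p.1 q.1 * p.2 q.2)) := by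
        rw [← Finset.sum_sub_distrib, Finset.mul_sum]
        exact Finset.sum_congr rfl fun q _ => by ring
      rw [e]; ring
    have hint2 : Integrable (fun p : (EuclideanSpace ℝ (Fin D)) × (EuclideanSpace ℝ (Fin E)) =>
        ∑ q : Fin D × Fin E, (-16 * (Γ₁ q - Γ₂ q)) * (p.1 q.1 * p.2 q.2)) π' :=
      integrable_finset_sum _ fun q _ => (hint_coord π' hc q).const_mul _
    calc ∫ p, costFn Γ₁ p ∂π'
        = ∫ p, (costFn Γ₂ p
            + ∑ q : Fin D × Fin E, (-16 * (Γ₁ q - Γ₂ q)) * (p.1 q.1 * p.2 q.2)) ∂π' :=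
          integral_congr_ae (Filter.Eventually.of_forall key)
      _ = ∫ p, costFn Γ₂ p ∂π'
            + ∑ q : Fin D × Fin E, (-16 * (Γ₁ q - Γ₂ q)) * ∫ p, p.1 q.1 * p.2 q.2 ∂π' := by
          rw [integral_add (hint_cost Γ₂ π' hc) hint2, integral_finset_sum]
          · congr 1
            exact Finset.sum_congr rfl fun q _ => integral_const_mul _ _
          · exact fun q _ => (hint_coord π' hc q).const_mul _
      _ = ∫ p, costFn Γ₂ p ∂π'
            - 16 * ∑ q : Fin D × Fin E, (Γ₁ q - Γ₂ q) * ∫ p, p.1 q.1 * p.2 q.2 ∂π' := by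
          have e2 : ∀ q ∈ (Finset.univ : Finset (Fin D × Fin E)),
              (-16 * (Γ₁ q - Γ₂ q)) * (∫ p, p.1 q.1 * p.2 q.2 ∂π')
                = -((16 * ((Γ₁ q - Γ₂ q) * ∫ p, p.1 q.1 * p.2 q.2 ∂π'))) := fun q _ => by ring
          rw [Finset.sum_congr rfl e2, Finset.sum_neg_distrib, ← Finset.mul_sum]
          ring
  -- `otGamma` written with `costFn`
  have hotdef : ∀ Γ'' : EuclideanSpace ℝ (Fin D × Fin E),
      otGamma α β ε Γ'' = ⨅ π' ∈ couplings α β,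
        ((∫ p, costFn Γ'' p ∂π' : ℝ) : EReal) + (ε : EReal) * klE π' (α.prod β) := fun _ => rfl
  have hot_le : ∀ (Γ'' : EuclideanSpace ℝ (Fin D × Fin E)), ∀ π' ∈ couplings α β,
      otGamma α β ε Γ'' ≤ ((∫ p, costFn Γ'' p ∂π' : ℝ) : EReal)
        + (ε : EReal) * klE π' (α.prod β) := by
    intro Γ'' π' hc
    rw [hotdef]
    exact iInf₂_le π' hc
  have hot_ge : ∀ Γ'' : EuclideanSpace ℝ (Fin D × Fin E),
      ((-(CB Γ'') : ℝ) : EReal) ≤ otGamma α β ε Γ'' := by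
    intro Γ''
    rw [hotdef]
    refine le_iInf₂ fun π' hc => ?_
    haveI := coupling_isProb α β hc
    have h1 : ((-(CB Γ'') : ℝ) : EReal) ≤ ((∫ p, costFn Γ'' p ∂π' : ℝ) : EReal) := by
      apply EReal.coe_le_coe_iff.2
      have := habs_cost Γ'' π' hc
      cases abs_le.1 this with
      | intro hl hr => linarith
    refine le_trans h1 ?_
    exact le_add_of_nonneg_right (ereal_mul_nonneg hε.le (klE_nonneg π' (α.prod β)))
  have hfin : ∀ Γ'' : EuclideanSpace ℝ (Fin D × Fin E),
      (((otGamma α β ε Γ'').toReal : ℝ) : EReal) = otGamma α β ε Γ'' := by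
    intro Γ''
    have hub : otGamma α β ε Γ'' ≤ ((∫ p, costFn Γ'' p ∂(α.prod β) : ℝ) : EReal) := by
      have := hot_le Γ'' (α.prod β) hμcoup
      rwa [klE_self, mul_zero, add_zero] at this
    have hnt : otGamma α β ε Γ'' ≠ ⊤ :=
      (lt_of_le_of_lt hub (EReal.coe_lt_top _)).ne
    have hnb : otGamma α β ε Γ'' ≠ ⊥ :=
      (lt_of_lt_of_le (EReal.bot_lt_coe _) (hot_ge Γ'')).ne'
    exact EReal.coe_toReal hnt hnb
  -- real-valued objective
  set F : EuclideanSpace ℝ (Fin D × Fin E) → ℝ :=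
    fun Γ'' => (otGamma α β ε Γ'').toReal with hFdef
  have hreal_le : ∀ (Γ'' : EuclideanSpace ℝ (Fin D × Fin E)) (π' :
      Measure ((EuclideanSpace ℝ (Fin D)) × (EuclideanSpace ℝ (Fin E)))),
      π' ∈ couplings α β → π' ≪ (α.prod β) → Integrable (llr π' (α.prod β)) π' →
      F Γ'' ≤ ∫ p, costFn Γ'' p ∂π' + ε * ∫ p, llr π' (α.prod β) p ∂π' := by
    intro Γ'' π' hc hac hint
    have h := hot_le Γ'' π' hc
    have hkl : klE π' (α.prod β) = ((∫ p, llr π' (α.prod β) p ∂π' : ℝ) : EReal) := by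
      unfold klE
      rw [if_pos ⟨hac, hint⟩]
    rw [hkl, ← EReal.coe_mul, ← EReal.coe_add, ← hfin Γ''] at h
    exact_mod_cast h
  -- the optimal coupling π
  haveI hπprob : IsProbabilityMeasure π := coupling_isProb α β hπ
  have hoptc : ((∫ p, costFn Γ p ∂π : ℝ) : EReal) + (ε : EReal) * klE π (α.prod β)
      = otGamma α β ε Γ := hopt
  have hklπ_ne : klE π (α.prod β) ≠ ⊤ := by
    intro htop
    rw [htop, EReal.coe_mul_top_of_pos hε, EReal.coe_add_top] at hoptc
    have h2 := hfin Γ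
    rw [← hoptc] at h2
    exact (EReal.coe_ne_top _) h2
  obtain ⟨hπac, hπint, hπkl⟩ := klE_ne_top_iff hklπ_ne
  set Kπ : ℝ := ∫ p, llr π (α.prod β) p ∂π with hKπdef
  have hFΓ : F Γ = ∫ p, costFn Γ p ∂π + ε * Kπ := by
    have h2 := hoptc
    rw [hπkl, ← EReal.coe_mul, ← EReal.coe_add, ← hfin Γ] at h2
    exact_mod_cast h2.symm
  -- the matrix M and the error function e
  set M : (Fin D × Fin E) → ℝ := fun q => ∫ p, p.1 q.1 * p.2 q.2 ∂π with hMdef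
  set e : EuclideanSpace ℝ (Fin D × Fin E) → ℝ :=
    fun h => F Γ + (-16) * (∑ q : Fin D × Fin E, h q * M q) - F (Γ + h) with hedef
  clear_value e
  have hsum_coord : ∀ (h : EuclideanSpace ℝ (Fin D × Fin E)) (q : Fin D × Fin E),
      (Γ + h) q - Γ q = h q := by
    intro h q
    simp [PiLp.add_apply]
  -- upper bound : e h ≥ 0
  have he_nonneg : ∀ h : EuclideanSpace ℝ (Fin D × Fin E), 0 ≤ e h := by
    intro h
    have h1 := hreal_le (Γ + h) π hπ hπac hπint
    rw [hlin (Γ + h) Γ π hπ] at h1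
    have h2 : ∑ q : Fin D × Fin E, ((Γ + h) q - Γ q) * ∫ p, p.1 q.1 * p.2 q.2 ∂π
        = ∑ q : Fin D × Fin E, h q * M q := by
      refine Finset.sum_congr rfl fun q _ => ?_
      rw [hsum_coord h q, hMdef]
    rw [h2] at h1
    rw [hedef]
    simp only
    rw [hFΓ]
    rw [← hKπdef] at h1
    linarith
  -- the key quantitative envelope estimate
  have hkey : ∀ h : EuclideanSpace ℝ (Fin D × Fin E), h ≠ 0 → ∀ s : ℝ, 0 < s →
      e h ≤ ‖h‖ ^ 2 + 16 * N * B0 * ‖h‖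
        * (s / 2 + (8 / (ε * s)) * (‖h‖ ^ 2 + 32 * N * B0 * ‖h‖)) := by
    intro h hne s hs
    set Γ' : EuclideanSpace ℝ (Fin D × Fin E) := Γ + h with hΓ'def
    set δ : ℝ := ‖h‖ ^ 2 with hδdef
    have hδpos : 0 < δ := by rw [hδdef]; exact pow_pos (norm_pos_iff.2 hne) 2
    -- a δ-optimal coupling at Γ'
    have hlt : otGamma α β ε Γ' < ((F Γ' + δ : ℝ) : EReal) := by
      rw [← hfin Γ']
      exact_mod_cast lt_add_of_pos_right _ hδpos
    rw [hotdef] at hlt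
    rw [iInf_lt_iff] at hlt
    obtain ⟨π', hlt⟩ := hlt
    rw [iInf_lt_iff] at hlt
    obtain ⟨hc', hlt⟩ := hlt
    haveI hπ'prob : IsProbabilityMeasure π' := coupling_isProb α β hc'
    have hklπ'_ne : klE π' (α.prod β) ≠ ⊤ := by
      intro htop
      rw [htop, EReal.coe_mul_top_of_pos hε, EReal.coe_add_top] at hlt
      exact (not_top_lt hlt)
    obtain ⟨hgac, hgint, hgkl⟩ := klE_ne_top_iff hklπ'_ne
    set K' : ℝ := ∫ p, llr π' (α.prod β) p ∂π' with hK'def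
    have hnear : ∫ p, costFn Γ' p ∂π' + ε * K' ≤ F Γ' + δ := by
      rw [hgkl, ← EReal.coe_mul, ← EReal.coe_add] at hlt
      exact_mod_cast hlt.le
    -- linearity identities
    set M' : (Fin D × Fin E) → ℝ := fun q => ∫ p, p.1 q.1 * p.2 q.2 ∂π' with hM'def
    have hlin' : ∫ p, costFn Γ p ∂π'
        = ∫ p, costFn Γ' p ∂π' + 16 * ∑ q : Fin D × Fin E, h q * M' q := by
      rw [hlin Γ Γ' π' hc']
      have h2 : ∑ q : Fin D × Fin E, (Γ q - Γ' q) * ∫ p, p.1 q.1 * p.2 q.2 ∂π'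
          = -∑ q : Fin D × Fin E, h q * M' q := by
        rw [← Finset.sum_neg_distrib]
        refine Finset.sum_congr rfl fun q _ => ?_
        have h3 : Γ q - Γ' q = -(h q) := by
          rw [hΓ'def]
          have := hsum_coord h q
          linarith
        rw [h3, hM'def]
        ring
      rw [h2]
      ring
    -- coordinate sum bounds
    have hsum_bound : ∀ (v : (Fin D × Fin E) → ℝ), (∀ q, |v q| ≤ B0) →
        |∑ q : Fin D × Fin E, h q * v q| ≤ N * ‖h‖ * B0 := by
      intro v hv
      calc |∑ q : Fin D × Fin E, h q * v q| ≤ ∑ q : Fin D × Fin E, |h q * v q| :=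
            Finset.abs_sum_le_sum_abs _ _
        _ ≤ ∑ q : Fin D × Fin E, |h q| * B0 := by
            refine Finset.sum_le_sum fun q _ => ?_
            rw [abs_mul]
            exact mul_le_mul_of_nonneg_left (hv q) (abs_nonneg _)
        _ = (∑ q : Fin D × Fin E, |h q|) * B0 := by rw [Finset.sum_mul]
        _ ≤ (N * ‖h‖) * B0 := by
            refine mul_le_mul_of_nonneg_right ?_ hB0pos.le
            rw [hNdef]
            exact sum_abs_le_card_norm h
    -- η-optimality of π' at Γ
    have hMbound : ∀ q, |M q| ≤ B0 := fun q => habs_coord π hπ q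
    have hM'bound : ∀ q, |M' q| ≤ B0 := fun q => habs_coord π' hc' q
    have hSv_bound := hsum_bound M hMbound
    have hSv'_bound := hsum_bound M' hM'bound
    have hup : F Γ' ≤ F Γ + (-16) * ∑ q : Fin D × Fin E, h q * M q := by
      have h4 := he_nonneg h
      rw [hedef] at h4
      simp only at h4
      rw [← hΓ'def] at h4
      linarith
    have hη : ∫ p, costFn Γ p ∂π' + ε * K' ≤ F Γ + (δ + 32 * N * B0 * ‖h‖) := by
      rw [hlin']
      have c1 : 16 * ∑ q : Fin D × Fin E, h q * M' q ≤ 16 * (N * ‖h‖ * B0) := by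
        have := (abs_le.1 hSv'_bound).2
        linarith
      have c2 : (-16) * ∑ q : Fin D × Fin E, h q * M q ≤ 16 * (N * ‖h‖ * B0) := by
        have := (abs_le.1 hSv_bound).1
        linarith
      nlinarith [hnear, hup]
    -- the midpoint coupling and the defect inequality
    obtain ⟨KM, hKM, hL1⟩ := klE_mid hπac hgac hπint hgint
    set ρ : Measure ((EuclideanSpace ℝ (Fin D)) × (EuclideanSpace ℝ (Fin E))) :=
      (2⁻¹ : ℝ≥0∞) • π + (2⁻¹ : ℝ≥0∞) • π' with hρdef
    have hρcoup : ρ ∈ couplings α β := by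
      constructor
      · rw [hρdef, Measure.map_add _ _ measurable_fst, Measure.map_smul, Measure.map_smul,
          hπ.1, hc'.1, ← two_smul ℝ≥0∞ ((2⁻¹ : ℝ≥0∞) • α), smul_smul,
          ENNReal.mul_inv_cancel (by norm_num) (by norm_num), one_smul]
      · rw [hρdef, Measure.map_add _ _ measurable_snd, Measure.map_smul, Measure.map_smul,
          hπ.2, hc'.2, ← two_smul ℝ≥0∞ ((2⁻¹ : ℝ≥0∞) • β), smul_smul,
          ENNReal.mul_inv_cancel (by norm_num) (by norm_num), one_smul]
    have hρ_cost : ∫ p, costFn Γ p ∂ρ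
        = (∫ p, costFn Γ p ∂π) / 2 + (∫ p, costFn Γ p ∂π') / 2 := by
      rw [hρdef, integral_add_measure ((hint_cost Γ π hπ).smul_measure (by norm_num))
        ((hint_cost Γ π' hc').smul_measure (by norm_num)),
        integral_smul_measure, integral_smul_measure]
      norm_num
      ring
    have hρ_le : F Γ ≤ ∫ p, costFn Γ p ∂ρ + ε * KM := by
      have h5 := hot_le Γ ρ hρcoup
      rw [hKM, ← EReal.coe_mul, ← EReal.coe_add, ← hfin Γ] at h5
      exact_mod_cast h5
    -- defect control
    have hdefect : Kπ / 2 + K' / 2 - KM ≤ (δ + 32 * N * B0 * ‖h‖) / (2 * ε) := by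
      have hexp : ε * (Kπ / 2 + K' / 2 - KM)
          = (∫ p, costFn Γ p ∂π + ε * Kπ) / 2 + (∫ p, costFn Γ p ∂π' + ε * K') / 2
            - (∫ p, costFn Γ p ∂ρ + ε * KM) := by
        rw [hρ_cost]; ring
      have hbound : ε * (Kπ / 2 + K' / 2 - KM) ≤ (δ + 32 * N * B0 * ‖h‖) / 2 := by
        rw [hexp, ← hFΓ]
        linarith [hη, hρ_le]
      rw [le_div_iff₀ (by positivity : (0:ℝ) < 2 * ε)]
      nlinarith [hbound]
    -- L1 bound between densities
    set L1 : ℝ := ∫ p, |((π.rnDeriv (α.prod β)) p).toReal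
      - ((π'.rnDeriv (α.prod β)) p).toReal| ∂(α.prod β) with hL1def
    have hL1nonneg : 0 ≤ L1 := by
      rw [hL1def]
      positivity
    have hL1s : L1 ≤ s / 2 + (8 / (ε * s)) * (δ + 32 * N * B0 * ‖h‖) := by
      have h1 := hL1 s hs
      rw [← hK'def, ← hKπdef] at h1
      have h2 : (16 / s) * (Kπ / 2 + K' / 2 - KM)
          ≤ (16 / s) * ((δ + 32 * N * B0 * ‖h‖) / (2 * ε)) :=
        mul_le_mul_of_nonneg_left hdefect (by positivity)
      have h3 : (16 / s) * ((δ + 32 * N * B0 * ‖h‖) / (2 * ε))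
          = (8 / (ε * s)) * (δ + 32 * N * B0 * ‖h‖) := by
        field_simp
        ring
      linarith
    -- difference of the moment matrices
    have hMdiff : ∀ q : Fin D × Fin E, |M' q - M q| ≤ B0 * L1 := by
      intro q
      haveI : π.HaveLebesgueDecomposition (α.prod β) :=
        Measure.haveLebesgueDecomposition_of_sigmaFinite π (α.prod β)
      haveI : π'.HaveLebesgueDecomposition (α.prod β) :=
        Measure.haveLebesgueDecomposition_of_sigmaFinite π' (α.prod β)
      have hMq : M q = ∫ p, ((π.rnDeriv (α.prod β)) p).toReal * (p.1 q.1 * p.2 q.2)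
          ∂(α.prod β) := by
        rw [hMdef]
        have h6 := integral_rnDeriv_smul (μ := π) (ν := α.prod β)
          (f := fun p : (EuclideanSpace ℝ (Fin D)) × (EuclideanSpace ℝ (Fin E)) =>
            p.1 q.1 * p.2 q.2) hπac
        simp only [smul_eq_mul] at h6
        exact h6.symm
      have hM'q : M' q = ∫ p, ((π'.rnDeriv (α.prod β)) p).toReal * (p.1 q.1 * p.2 q.2)
          ∂(α.prod β) := by
        rw [hM'def]
        have h6 := integral_rnDeriv_smul (μ := π') (ν := α.prod β)
          (f := fun p : (EuclideanSpace ℝ (Fin D)) × (EuclideanSpace ℝ (Fin E)) =>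
            p.1 q.1 * p.2 q.2) hgac
        simp only [smul_eq_mul] at h6
        exact h6.symm
      have hintf : Integrable (fun p => ((π.rnDeriv (α.prod β)) p).toReal
          * (p.1 q.1 * p.2 q.2)) (α.prod β) := by
        have h6 := (integrable_rnDeriv_smul_iff (μ := π) (ν := α.prod β)
          (f := fun p : (EuclideanSpace ℝ (Fin D)) × (EuclideanSpace ℝ (Fin E)) =>
            p.1 q.1 * p.2 q.2) hπac).mpr (hint_coord π hπ q)
        simpa [smul_eq_mul] using h6
      have hintg : Integrable (fun p => ((π'.rnDeriv (α.prod β)) p).toReal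
          * (p.1 q.1 * p.2 q.2)) (α.prod β) := by
        have h6 := (integrable_rnDeriv_smul_iff (μ := π') (ν := α.prod β)
          (f := fun p : (EuclideanSpace ℝ (Fin D)) × (EuclideanSpace ℝ (Fin E)) =>
            p.1 q.1 * p.2 q.2) hgac).mpr (hint_coord π' hc' q)
        simpa [smul_eq_mul] using h6
      rw [hMq, hM'q, ← integral_sub hintg hintf]
      have hbound_int : Integrable (fun p : (EuclideanSpace ℝ (Fin D))
          × (EuclideanSpace ℝ (Fin E)) => |((π.rnDeriv (α.prod β)) p).toReal
          - ((π'.rnDeriv (α.prod β)) p).toReal| * B0) (α.prod β) := by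
        apply Integrable.mul_const
        exact (Measure.integrable_toReal_rnDeriv.sub Measure.integrable_toReal_rnDeriv).abs
      rw [← Real.norm_eq_abs]
      refine le_trans (norm_integral_le_of_norm_le hbound_int ?_) ?_
      · filter_upwards [hsupp (α.prod β) hμcoup] with p hp
        rw [Real.norm_eq_abs]
        have e1 : ((π'.rnDeriv (α.prod β)) p).toReal * (p.1 q.1 * p.2 q.2)
            - ((π.rnDeriv (α.prod β)) p).toReal * (p.1 q.1 * p.2 q.2)
            = (((π'.rnDeriv (α.prod β)) p).toReal - ((π.rnDeriv (α.prod β)) p).toReal)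
              * (p.1 q.1 * p.2 q.2) := by ring
        rw [e1, abs_mul]
        have e2 : |p.1 q.1 * p.2 q.2| ≤ B0 := by
          rw [abs_mul]
          exact mul_le_mul (le_trans (abs_coord_le_norm p.1 q.1) hp.1)
            (le_trans (abs_coord_le_norm p.2 q.2) hp.2) (abs_nonneg _) hRXpos.le
        have e3 : |((π'.rnDeriv (α.prod β)) p).toReal - ((π.rnDeriv (α.prod β)) p).toReal|
            = |((π.rnDeriv (α.prod β)) p).toReal - ((π'.rnDeriv (α.prod β)) p).toReal| :=
          abs_sub_comm _ _
        rw [e3]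
        have e4 : |((π.rnDeriv (α.prod β)) p).toReal - ((π'.rnDeriv (α.prod β)) p).toReal|
            * |p.1 q.1 * p.2 q.2|
            ≤ |((π.rnDeriv (α.prod β)) p).toReal - ((π'.rnDeriv (α.prod β)) p).toReal| * B0 :=
          mul_le_mul_of_nonneg_left e2 (abs_nonneg _)
        exact e4
      · rw [integral_mul_const, hL1def]
        apply le_of_eq
        ring
    -- conclusion of hkey
    have hlow : F Γ + (-16) * (∑ q : Fin D × Fin E, h q * M q)
        - δ - 16 * (N * ‖h‖ * (B0 * L1)) ≤ F Γ' := by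
      have hc0 : F Γ ≤ ∫ p, costFn Γ p ∂π' + ε * K' := by
        have := hreal_le Γ π' hc' hgac hgint
        rw [← hK'def] at this
        exact this
      have hc1 : ∫ p, costFn Γ' p ∂π' + ε * K'
          = ∫ p, costFn Γ p ∂π' + ε * K' - 16 * ∑ q : Fin D × Fin E, h q * M' q := by
        rw [hlin']; ring
      have hdiffsum : |∑ q : Fin D × Fin E, h q * (M' q - M q)| ≤ N * ‖h‖ * (B0 * L1) := by
        calc |∑ q : Fin D × Fin E, h q * (M' q - M q)|
            ≤ ∑ q : Fin D × Fin E, |h q * (M' q - M q)| := Finset.abs_sum_le_sum_abs _ _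
          _ ≤ ∑ q : Fin D × Fin E, |h q| * (B0 * L1) := by
              refine Finset.sum_le_sum fun q _ => ?_
              rw [abs_mul]
              exact mul_le_mul_of_nonneg_left (hMdiff q) (abs_nonneg _)
          _ = (∑ q : Fin D × Fin E, |h q|) * (B0 * L1) := by rw [Finset.sum_mul]
          _ ≤ (N * ‖h‖) * (B0 * L1) := by
              refine mul_le_mul_of_nonneg_right ?_ (by positivity)
              rw [hNdef]
              exact sum_abs_le_card_norm h
          _ = N * ‖h‖ * (B0 * L1) := by ring
      have hsplit : ∑ q : Fin D × Fin E, h q * M' q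
          = ∑ q : Fin D × Fin E, h q * M q + ∑ q : Fin D × Fin E, h q * (M' q - M q) := by
        rw [← Finset.sum_add_distrib]
        exact Finset.sum_congr rfl fun q _ => by ring
      have habs2 := (abs_le.1 hdiffsum).2
      linarith [hc0, hc1, hsplit, hnear]
    have hfinal : e h ≤ δ + 16 * (N * ‖h‖ * (B0 * L1)) := by
      rw [hedef]
      simp only
      rw [← hΓ'def]
      linarith [hlow]
    calc e h ≤ δ + 16 * (N * ‖h‖ * (B0 * L1)) := hfinal
      _ ≤ δ + 16 * (N * ‖h‖ * (B0 * (s / 2 + (8 / (ε * s)) * (δ + 32 * N * B0 * ‖h‖)))) := by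
          have hmono2 : N * ‖h‖ * (B0 * L1)
              ≤ N * ‖h‖ * (B0 * (s / 2 + (8 / (ε * s)) * (δ + 32 * N * B0 * ‖h‖))) :=
            mul_le_mul_of_nonneg_left (mul_le_mul_of_nonneg_left hL1s hB0pos.le)
              (by positivity)
          linarith
      _ = ‖h‖ ^ 2 + 16 * N * B0 * ‖h‖
            * (s / 2 + (8 / (ε * s)) * (‖h‖ ^ 2 + 32 * N * B0 * ‖h‖)) := by
          rw [hδdef]
          ring
  -- final little-o argument
  rw [hasGradientAt_iff_hasFDerivAt, hasFDerivAt_iff_isLittleO_nhds_zero]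
  set g : EuclideanSpace ℝ (Fin D × Fin E) := (WithLp.equiv 2 (Fin D × Fin E → ℝ)).symm
    (fun q => 2 * Γ q - 2 * ∫ p, p.1 q.1 * p.2 q.2 ∂π) with hgdef
  have hgq : ∀ q, g q = 2 * Γ q - 2 * M q := by
    intro q
    rw [hgdef, hMdef]
    rfl
  have htd : ∀ h : EuclideanSpace ℝ (Fin D × Fin E),
      ((InnerProductSpace.toDual ℝ (EuclideanSpace ℝ (Fin D × Fin E))) g) h
        = ∑ q : Fin D × Fin E, (2 * Γ q - 2 * M q) * h q := by
    intro h
    rw [InnerProductSpace.toDual_apply_apply, PiLp.inner_apply]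
    refine Finset.sum_congr rfl fun q _ => ?_
    rw [hgq q]
    simp [RCLike.inner_apply, conj_trivial, mul_comm]
  have herr : ∀ h : EuclideanSpace ℝ (Fin D × Fin E),
      ((∑ q : Fin D × Fin E, ((Γ + h) q) ^ 2) + (1 / 8) * (otGamma α β ε (Γ + h)).toReal)
        - ((∑ q : Fin D × Fin E, (Γ q) ^ 2) + (1 / 8) * (otGamma α β ε Γ).toReal)
        - ((InnerProductSpace.toDual ℝ (EuclideanSpace ℝ (Fin D × Fin E))) g) h
        = (∑ q : Fin D × Fin E, (h q) ^ 2) - (1 / 8) * e h := by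
    intro h
    rw [htd h, hedef]
    simp only
    have hexp : ∑ q : Fin D × Fin E, ((Γ + h) q) ^ 2
        = ∑ q : Fin D × Fin E, ((Γ q) ^ 2 + 2 * Γ q * h q + (h q) ^ 2) := by
      refine Finset.sum_congr rfl fun q _ => ?_
      have h7 : (Γ + h) q = Γ q + h q := by simp [PiLp.add_apply]
      rw [h7]; ring
    rw [hexp, Finset.sum_add_distrib, Finset.sum_add_distrib]
    have hsplit2 : ∑ q : Fin D × Fin E, (2 * Γ q - 2 * M q) * h q
        = ∑ q : Fin D × Fin E, 2 * Γ q * h q - ∑ q : Fin D × Fin E, 2 * (h q * M q) := by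
      rw [← Finset.sum_sub_distrib]
      exact Finset.sum_congr rfl fun q _ => by ring
    rw [hsplit2]
    have hm2 : ∑ q : Fin D × Fin E, 2 * (h q * M q)
        = 2 * ∑ q : Fin D × Fin E, h q * M q := by rw [← Finset.mul_sum]
    rw [hm2]
    have hFF : F (Γ + h) = (otGamma α β ε (Γ + h)).toReal := rfl
    have hFF2 : F Γ = (otGamma α β ε Γ).toReal := rfl
    rw [← hFF, ← hFF2]
    ring
  rw [Asymptotics.isLittleO_iff]
  intro c hc
  obtain ⟨C1, hC1⟩ : ∃ x : ℝ, x = 16 * N * B0 := ⟨_, rfl⟩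
  have hC1nonneg : 0 ≤ C1 := by rw [hC1]; positivity
  obtain ⟨s, hs⟩ : ∃ x : ℝ, x = c / (C1 + 1) := ⟨_, rfl⟩
  have hspos : 0 < s := by rw [hs]; positivity
  have hCs : C1 * s ≤ c := by
    rw [hs, mul_comm, div_mul_eq_mul_div, div_le_iff₀ (by positivity : (0:ℝ) < C1 + 1)]
    nlinarith [hc.le]
  obtain ⟨u, hu⟩ : ∃ x : ℝ, x = 8 / (ε * s) := ⟨_, rfl⟩
  have hupos : 0 < u := by rw [hu]; positivity
  obtain ⟨C5, hC5⟩ : ∃ x : ℝ, x = 2 + C1 * (1 + 2 * C1) * u := ⟨_, rfl⟩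
  have hC5pos : 0 < C5 := by
    have h1 : 0 ≤ C1 * (1 + 2 * C1) * u :=
      mul_nonneg (mul_nonneg hC1nonneg (by nlinarith [hC1nonneg])) hupos.le
    rw [hC5]
    linarith
  have hr0pos : 0 < min 1 (c / (2 * C5)) := lt_min one_pos (by positivity)
  have hmem : Metric.ball (0 : EuclideanSpace ℝ (Fin D × Fin E)) (min 1 (c / (2 * C5))) ∈
      nhds (0 : EuclideanSpace ℝ (Fin D × Fin E)) := Metric.ball_mem_nhds _ hr0pos
  filter_upwards [hmem] with h hball
  rw [mem_ball_zero_iff] at hball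
  by_cases h0 : h = 0
  · subst h0
    rw [herr 0]
    have he0 : e 0 = 0 := by
      rw [hedef]
      simp
    rw [he0]
    simp
  · have hnorm_pos : 0 < ‖h‖ := norm_pos_iff.2 h0
    have hnorm1 : ‖h‖ ≤ 1 := le_trans hball.le (min_le_left _ _)
    have hnormr : ‖h‖ ≤ c / (2 * C5) := le_trans hball.le (min_le_right _ _)
    have hC5h : ‖h‖ * C5 ≤ c / 2 := by
      rw [le_div_iff₀ (by norm_num : (0:ℝ) < 2)]
      rw [le_div_iff₀ (by positivity : (0:ℝ) < 2 * C5)] at hnormr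
      nlinarith [hnormr]
    have he0 := he_nonneg h
    rw [herr h, Real.norm_eq_abs]
    have hsumsq : ∑ q : Fin D × Fin E, (h q) ^ 2 = ‖h‖ ^ 2 := sum_sq_eq_norm_sq h
    rw [hsumsq]
    have habs3 : |‖h‖ ^ 2 - (1 / 8) * e h| ≤ ‖h‖ ^ 2 + (1 / 8) * e h := by
      rw [abs_le]
      constructor
      · nlinarith [sq_nonneg ‖h‖, he0]
      · nlinarith [sq_nonneg ‖h‖, he0]
    refine le_trans habs3 ?_
    have hkey' := hkey h h0 s hspos
    have h32 : 32 * N * B0 = 2 * C1 := by rw [hC1]; ring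
    rw [h32, ← hC1, ← hu] at hkey'
    have e1 : e h ≤ ‖h‖ ^ 2 + C1 * ‖h‖ * s / 2 + C1 * u * ‖h‖ ^ 3
        + 2 * C1 ^ 2 * u * ‖h‖ ^ 2 := by nlinarith [hkey']
    have hcube : C1 * u * ‖h‖ ^ 3 ≤ C1 * u * ‖h‖ ^ 2 := by
      have h3 : ‖h‖ ^ 3 ≤ ‖h‖ ^ 2 := by nlinarith [hnorm_pos.le, hnorm1]
      have h4 : 0 ≤ C1 * u := mul_nonneg hC1nonneg hupos.le
      nlinarith [mul_le_mul_of_nonneg_left h3 h4]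
    have hA2 : C1 * s * ‖h‖ ≤ c * ‖h‖ := mul_le_mul_of_nonneg_right hCs (norm_nonneg h)
    have hA4 : 2 * ‖h‖ ^ 2 + C1 * u * ‖h‖ ^ 2 + 2 * C1 ^ 2 * u * ‖h‖ ^ 2 ≤ (c / 2) * ‖h‖ := by
      have m := mul_le_mul_of_nonneg_left hC5h (norm_nonneg h)
      rw [hC5] at m
      nlinarith [m]
    have m1 : 0 ≤ C1 * u * ‖h‖ ^ 2 := by
      have := mul_nonneg hC1nonneg hupos.le
      positivity
    have m2 : 0 ≤ C1 ^ 2 * u * ‖h‖ ^ 2 := by positivity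
    nlinarith [e1, hcube, hA2, hA4, m1, m2, sq_nonneg ‖h‖,
      mul_nonneg hc.le (norm_nonneg h)]
end
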